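/- arXiv:0911.5367 — 8 statements merged into one kernel-verified Lean document; each statement's English description precedes it below -/
import Mathlib

section
/- A symmetric function k : X × X → ℝ on a nonempty set X is a positive definite kernel if and only if there exist a type T and a mapping φ from X to ℓ²(T), the space of real families (u_t)_{t∈T} with ∑_{t∈T} |u_t|² < ∞, such that for all x, y ∈ X, k(x,y) = ∑_{t∈T} φ(x)_t φ(y)_t = ⟨φ(x), φ(y)⟩_{ℓ²(T)}. -/
open scoped RealInnerProductSpace

/-- A symmetric function `k : X × X → ℝ` is a positive definite kernel on `X` if
`∑ᵢⱼ cᵢ cⱼ k(xᵢ,xⱼ) ≥ 0` for all finite families of points and real coefficients. -/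
def IsPosDefKernel {X : Type*} (k : X → X → ℝ) : Prop :=
  (∀ x y, k x y = k y x) ∧
  ∀ (n : ℕ) (x : Fin n → X) (c : Fin n → ℝ),
    0 ≤ ∑ i, ∑ j, c i * c j * k (x i) (x j)

noncomputable def kerB {X : Type u} (k : X → X → ℝ) :
    (X →₀ ℝ) →ₗ[ℝ] (X →₀ ℝ) →ₗ[ℝ] ℝ :=
  Finsupp.lsum ℝ fun x => LinearMap.toSpanSingleton ℝ _
    (Finsupp.lsum ℝ fun y => LinearMap.toSpanSingleton ℝ ℝ (k x y))

lemma kerB_apply {X : Type u} (k : X → X → ℝ) (f g : X →₀ ℝ) :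
    kerB k f g = ∑ x ∈ f.support, ∑ y ∈ g.support, f x * g y * k x y := by
  simp only [kerB, Finsupp.lsum_apply, Finsupp.sum, LinearMap.coe_sum,
    Finset.sum_apply, LinearMap.toSpanSingleton_apply, LinearMap.smul_apply,
    smul_eq_mul]
  refine Finset.sum_congr rfl fun x _ => ?_
  rw [Finset.mul_sum]
  exact Finset.sum_congr rfl fun y _ => by ring

lemma kerB_single {X : Type u} (k : X → X → ℝ) (x y : X) :
    kerB k (Finsupp.single x 1) (Finsupp.single y 1) = k x y := by
  simp [kerB]

lemma double_sum_fin {α : Type*} (s : Finset α) (F : α → α → ℝ) :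
    ∑ i : Fin s.card, ∑ j : Fin s.card, F (s.equivFin.symm i) (s.equivFin.symm j)
      = ∑ x ∈ s, ∑ y ∈ s, F x y := by
  rw [Equiv.sum_comp s.equivFin.symm
    (fun z : s => ∑ j : Fin s.card, F z (s.equivFin.symm j))]
  rw [← Finset.sum_coe_sort s (fun x => ∑ y ∈ s, F x y)]
  refine Finset.sum_congr rfl fun z _ => ?_
  rw [Equiv.sum_comp s.equivFin.symm (fun w : s => F z w), Finset.sum_coe_sort]

theorem posdef_iff_exists_l2_feature_map
    {X : Type u} [Nonempty X] (k : X → X → ℝ) (hsym : ∀ x y, k x y = k y x) :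
    IsPosDefKernel k ↔
      ∃ (T : Type u) (φ : X → lp (fun _ : T => ℝ) 2),
        ∀ x y, k x y = ∑' t : T, φ x t * φ y t ∧ k x y = ⟪φ x, φ y⟫ := by
  constructor
  · rintro ⟨-, hpos⟩
    -- positive semidefinite inner product on finitely supported functions
    have hBsymm : ∀ f g : X →₀ ℝ, kerB k f g = kerB k g f := by
      intro f g
      rw [kerB_apply, kerB_apply, Finset.sum_comm]
      exact Finset.sum_congr rfl fun y _ => Finset.sum_congr rfl fun x _ => by
        rw [hsym]; ring
    have hBnonneg : ∀ f : X →₀ ℝ, 0 ≤ kerB k f f := by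
      intro f
      have h := hpos f.support.card (fun i => (f.support.equivFin.symm i : X))
        (fun i => f (f.support.equivFin.symm i : X))
      rw [kerB_apply, ← double_sum_fin f.support (fun x y => f x * f y * k x y)]
      exact h
    letI c : PreInnerProductSpace.Core ℝ (X →₀ ℝ) :=
      { inner := fun f g => kerB k f g
        conj_inner_symm := fun f g => by simpa using hBsymm g f
        re_inner_nonneg := fun f => by simpa using hBnonneg f
        add_left := fun f g h => by simp
        smul_left := fun f g r => by simp }
    letI : SeminormedAddCommGroup (X →₀ ℝ) :=
      InnerProductSpace.Core.toSeminormedAddCommGroup (𝕜 := ℝ)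
    letI : NormedSpace ℝ (X →₀ ℝ) := by
      exact InnerProductSpace.Core.toNormedSpace (𝕜 := ℝ)
    letI : InnerProductSpace ℝ (X →₀ ℝ) :=
      { inner := fun f g => kerB k f g
        norm_sq_eq_re_inner := fun f => by
          show Real.sqrt (RCLike.re (c.inner f f)) ^ 2 = RCLike.re (c.inner f f)
          exact Real.sq_sqrt (c.re_inner_nonneg f)
        conj_inner_symm := fun f g => by exact c.conj_inner_symm f g
        add_left := fun f g h => by exact c.add_left f g h
        smul_left := fun f g r => by simp }
    let H := UniformSpace.Completion (X →₀ ℝ)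
    obtain ⟨w, b, -⟩ := exists_hilbertBasis ℝ H
    refine ⟨w, fun x => b.repr ((Finsupp.single x 1 : X →₀ ℝ) : H), fun x y => ?_⟩
    have h1 : ⟪b.repr ((Finsupp.single x 1 : X →₀ ℝ) : H),
        b.repr ((Finsupp.single y 1 : X →₀ ℝ) : H)⟫ = k x y := by
      rw [b.repr.inner_map_map, UniformSpace.Completion.inner_coe]
      exact kerB_single k x y
    refine ⟨?_, h1.symm⟩
    rw [← h1, lp.inner_eq_tsum]
    simp [RCLike.inner_apply]
    exact tsum_congr fun t => mul_comm _ _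
  · rintro ⟨T, φ, hφ⟩
    refine ⟨hsym, fun n x c => ?_⟩
    have key : ∑ i, ∑ j, c i * c j * k (x i) (x j)
        = ⟪∑ i, c i • φ (x i), ∑ j, c j • φ (x j)⟫ := by
      rw [sum_inner]
      refine Finset.sum_congr rfl fun i _ => ?_
      rw [inner_sum]
      refine Finset.sum_congr rfl fun j _ => ?_
      rw [real_inner_smul_left, real_inner_smul_right, ← (hφ (x i) (x j)).2]
      ring
    rw [key]
    exact real_inner_self_nonneg
end

section
/- Let X be a nonempty set and ψ : X × X → ℝ a symmetric function. Then ψ is a negative definite kernel on X if and only if for every t > 0 the function (x,y) ↦ exp(−t·ψ(x,y)) is a positive definite kernel on X. -/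
/-- A symmetric function `ψ : X × X → ℝ` is a negative definite kernel on `X` if
`∑ᵢⱼ cᵢ cⱼ ψ(xᵢ,xⱼ) ≤ 0` for all finite families of points and real coefficients
summing to zero. -/
def IsNegDefKernel {X : Type*} (ψ : X → X → ℝ) : Prop :=
  (∀ x y, ψ x y = ψ y x) ∧
  ∀ (n : ℕ) (x : Fin n → X) (c : Fin n → ℝ), (∑ i, c i) = 0 →
    ∑ i, ∑ j, c i * c j * ψ (x i) (x j) ≤ 0

/-- A symmetric entrywise-positive matrix admits a Gram representation. -/
lemma gram_rep {n : ℕ} (M : Fin n → Fin n → ℝ) (hsymm : ∀ i j, M i j = M j i)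
    (hpos : ∀ c : Fin n → ℝ, 0 ≤ ∑ i, ∑ j, c i * c j * M i j) :
    ∃ B : Fin n → Fin n → ℝ, ∀ i j, M i j = ∑ k, B k i * B k j := by
  have hps : (Matrix.of M).PosSemidef := by
    refine Matrix.posSemidef_iff_dotProduct_mulVec.mpr ⟨?_, ?_⟩
    · ext i j
      simpa [Matrix.conjTranspose, Matrix.transpose] using hsymm j i
    · intro c
      have h := hpos c
      have heq : ∑ i, ∑ j, c i * c j * M i j
          = dotProduct (star c) (Matrix.mulVec (Matrix.of M) c) := by
        simp only [dotProduct, Matrix.mulVec, Pi.star_apply, star_trivial,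
          Matrix.of_apply, Finset.mul_sum]
        exact Finset.sum_congr rfl fun i _ => Finset.sum_congr rfl fun j _ => by ring
      rw [← heq]; exact h
  open scoped MatrixOrder in
  obtain ⟨B, hB⟩ := CStarAlgebra.nonneg_iff_eq_star_mul_self.mp hps.nonneg
  refine ⟨fun k i => B k i, fun i j => ?_⟩
  have := congrFun (congrFun hB i) j
  simpa [Matrix.mul_apply, Matrix.star_eq_conjTranspose, Matrix.conjTranspose] using this

/-- Entrywise powers of a Gram matrix stay positive (Schur product theorem). -/
lemma pow_entry_pos {n : ℕ} (M : Fin n → Fin n → ℝ) (B : Fin n → Fin n → ℝ)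
    (hB : ∀ i j, M i j = ∑ k, B k i * B k j) (m : ℕ) :
    ∀ c : Fin n → ℝ, 0 ≤ ∑ i, ∑ j, c i * c j * (M i j) ^ m := by
  induction m with
  | zero =>
    intro c
    have : ∑ i, ∑ j, c i * c j * (M i j) ^ 0 = (∑ i, c i) * (∑ j, c j) := by
      rw [Fintype.sum_mul_sum]
      exact Finset.sum_congr rfl fun i _ => Finset.sum_congr rfl fun j _ => by ring
    rw [this]; exact mul_self_nonneg _
  | succ m ih =>
    intro c
    have key : ∀ i j, c i * c j * M i j ^ (m + 1)
        = ∑ k, (c i * B k i) * (c j * B k j) * M i j ^ m := by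
      intro i j
      rw [pow_succ]
      nth_rewrite 2 [hB i j]
      rw [show c i * c j * (M i j ^ m * ∑ k, B k i * B k j)
          = ∑ k, c i * c j * (M i j ^ m * (B k i * B k j)) by
        rw [Finset.mul_sum, Finset.mul_sum]]
      exact Finset.sum_congr rfl fun k _ => by ring
    calc (0:ℝ) ≤ ∑ k, ∑ i, ∑ j, (c i * B k i) * (c j * B k j) * M i j ^ m :=
          Finset.sum_nonneg fun k _ => ih (fun i => c i * B k i)
      _ = ∑ i, ∑ k, ∑ j, (c i * B k i) * (c j * B k j) * M i j ^ m := Finset.sum_comm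
      _ = ∑ i, ∑ j, ∑ k, (c i * B k i) * (c j * B k j) * M i j ^ m :=
          Finset.sum_congr rfl fun i _ => Finset.sum_comm
      _ = ∑ i, ∑ j, c i * c j * M i j ^ (m + 1) :=
          Finset.sum_congr rfl fun i _ => Finset.sum_congr rfl fun j _ => (key i j).symm

lemma real_exp_tsum (x : ℝ) : Real.exp x = ∑' m : ℕ, x ^ m / m.factorial := by
  rw [Real.exp_eq_exp_ℝ, NormedSpace.exp_eq_tsum_div]

/-- Entrywise exponential of a Gram matrix is positive. -/
lemma exp_entry_pos {n : ℕ} (M : Fin n → Fin n → ℝ) (B : Fin n → Fin n → ℝ)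
    (hB : ∀ i j, M i j = ∑ k, B k i * B k j) (c : Fin n → ℝ) :
    0 ≤ ∑ i, ∑ j, c i * c j * Real.exp (M i j) := by
  have hsum : ∀ i j : Fin n, Summable (fun m : ℕ => c i * c j * (M i j ^ m / m.factorial)) :=
    fun i j => (Real.summable_pow_div_factorial _).mul_left _
  have hsum2 : ∀ i : Fin n, Summable (fun m : ℕ => ∑ j, c i * c j * (M i j ^ m / m.factorial)) :=
    fun i => summable_sum fun j _ => hsum i j
  calc (0:ℝ) ≤ ∑' m : ℕ, ∑ i, ∑ j, c i * c j * (M i j ^ m / m.factorial) := by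
        refine tsum_nonneg fun m => ?_
        have : ∑ i, ∑ j, c i * c j * (M i j ^ m / m.factorial)
            = (∑ i, ∑ j, c i * c j * M i j ^ m) / m.factorial := by
          rw [Finset.sum_div]
          exact Finset.sum_congr rfl fun i _ => by
            rw [Finset.sum_div]
            exact Finset.sum_congr rfl fun j _ => by ring
        rw [this]
        exact div_nonneg (pow_entry_pos M B hB m c) (Nat.cast_nonneg _)
    _ = ∑ i, ∑' m : ℕ, ∑ j, c i * c j * (M i j ^ m / m.factorial) :=
        Summable.tsum_finsetSum fun i _ => hsum2 i
    _ = ∑ i, ∑ j, ∑' m : ℕ, c i * c j * (M i j ^ m / m.factorial) :=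
        Finset.sum_congr rfl fun i _ => Summable.tsum_finsetSum fun j _ => hsum i j
    _ = ∑ i, ∑ j, c i * c j * Real.exp (M i j) := by
        refine Finset.sum_congr rfl fun i _ => Finset.sum_congr rfl fun j _ => ?_
        rw [tsum_mul_left, real_exp_tsum]

/-- The key kernel built from a negative definite kernel is positive. -/
lemma negdef_aux {X : Type*} (ψ : X → X → ℝ) (hsym : ∀ x y, ψ x y = ψ y x)
    (hnd : IsNegDefKernel ψ) (x0 : X) {n : ℕ} (x : Fin n → X) (c : Fin n → ℝ) :
    0 ≤ ∑ i, ∑ j, c i * c j *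
      (ψ (x i) x0 + ψ (x j) x0 - ψ (x i) (x j) - ψ x0 x0) := by
  set S := ∑ i, c i with hS
  set P := ∑ i, c i * ψ (x i) x0 with hP
  set Q := ∑ i, ∑ j, c i * c j * ψ (x i) (x j) with hQ
  have h := hnd.2 (n + 1) (Fin.cons x0 x) (Fin.cons (-S) c) (by
    rw [Fin.sum_cons]; simp [hS])
  simp only [Fin.sum_univ_succ, Fin.cons_zero, Fin.cons_succ] at h
  have hA : ∑ j, -S * c j * ψ x0 (x j) = -(S * P) := by
    have : ∀ j, -S * c j * ψ x0 (x j) = -S * (c j * ψ (x j) x0) := fun j => by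
      rw [hsym x0 (x j)]; ring
    rw [Finset.sum_congr rfl fun j _ => this j, ← Finset.mul_sum, ← hP]; ring
  have hB : ∑ i, (c i * -S * ψ (x i) x0 + ∑ j, c i * c j * ψ (x i) (x j))
      = -(S * P) + Q := by
    rw [Finset.sum_add_distrib, ← hQ]
    congr 1
    have : ∀ i, c i * -S * ψ (x i) x0 = -S * (c i * ψ (x i) x0) := fun i => by ring
    rw [Finset.sum_congr rfl fun i _ => this i, ← Finset.mul_sum, ← hP]; ring
  rw [hA, hB] at h
  -- now expand the goal
  have e1 : ∀ a : Fin n → ℝ, ∑ i, ∑ j, c i * c j * a i = (∑ i, c i * a i) * S := by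
    intro a
    rw [Finset.sum_mul]
    refine Finset.sum_congr rfl fun i _ => ?_
    rw [hS, Finset.mul_sum]
    exact Finset.sum_congr rfl fun j _ => by ring
  have e2 : ∀ a : Fin n → ℝ, ∑ i, ∑ j, c i * c j * a j = S * ∑ j, c j * a j := by
    intro a
    rw [hS, Finset.sum_mul]
    refine Finset.sum_congr rfl fun i _ => ?_
    rw [Finset.mul_sum]
    exact Finset.sum_congr rfl fun j _ => by ring
  have hT : ∑ i, ∑ j, c i * c j *
      (ψ (x i) x0 + ψ (x j) x0 - ψ (x i) (x j) - ψ x0 x0)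
      = P * S + S * P - Q - (S * ψ x0 x0) * S := by
    have expand : ∀ i j : Fin n, c i * c j *
        (ψ (x i) x0 + ψ (x j) x0 - ψ (x i) (x j) - ψ x0 x0)
        = c i * c j * ψ (x i) x0 + c i * c j * ψ (x j) x0
          - c i * c j * ψ (x i) (x j) - c i * c j * ψ x0 x0 := fun i j => by ring
    simp only [expand, Finset.sum_sub_distrib, Finset.sum_add_distrib]
    rw [e1 (fun i => ψ (x i) x0), e2 (fun j => ψ (x j) x0),
      e1 (fun _ => ψ x0 x0), ← hQ]
    have : ∑ i, c i * ψ x0 x0 = S * ψ x0 x0 := by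
      rw [hS, Finset.sum_mul]
    rw [this, ← hP]
  rw [hT]
  nlinarith [h]

/-- Hard direction of Schoenberg's theorem. -/
lemma hard_dir {X : Type*} [Nonempty X] (ψ : X → X → ℝ) (hsym : ∀ x y, ψ x y = ψ y x)
    (hnd : IsNegDefKernel ψ) (t : ℝ) (ht : 0 < t) (n : ℕ) (x : Fin n → X)
    (c : Fin n → ℝ) : 0 ≤ ∑ i, ∑ j, c i * c j * Real.exp (-t * ψ (x i) (x j)) := by
  obtain ⟨x0⟩ := ‹Nonempty X›
  set K : Fin n → Fin n → ℝ := fun i j =>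
    t * (ψ (x i) x0 + ψ (x j) x0 - ψ (x i) (x j) - ψ x0 x0) with hK
  have hKsym : ∀ i j, K i j = K j i := by
    intro i j; simp only [hK]; rw [hsym (x i) (x j)]; ring
  have hKpos : ∀ c' : Fin n → ℝ, 0 ≤ ∑ i, ∑ j, c' i * c' j * K i j := by
    intro c'
    have h0 := negdef_aux ψ hsym hnd x0 x c'
    have : ∑ i, ∑ j, c' i * c' j * K i j
        = t * ∑ i, ∑ j, c' i * c' j *
          (ψ (x i) x0 + ψ (x j) x0 - ψ (x i) (x j) - ψ x0 x0) := by
      rw [Finset.mul_sum]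
      refine Finset.sum_congr rfl fun i _ => ?_
      rw [Finset.mul_sum]
      exact Finset.sum_congr rfl fun j _ => by simp only [hK]; ring
    rw [this]
    exact mul_nonneg ht.le h0
  obtain ⟨B, hB⟩ := gram_rep K hKsym hKpos
  set a : Fin n → ℝ := fun i => Real.exp (-t * ψ (x i) x0 + t * ψ x0 x0 / 2) with ha
  have hpoint : ∀ i j, c i * c j * Real.exp (-t * ψ (x i) (x j))
      = (c i * a i) * (c j * a j) * Real.exp (K i j) := by
    intro i j
    have : a i * a j * Real.exp (K i j) = Real.exp (-t * ψ (x i) (x j)) := by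
      rw [ha]
      simp only [hK]
      rw [← Real.exp_add, ← Real.exp_add]
      congr 1
      ring
    rw [← this]; ring
  calc (0:ℝ) ≤ ∑ i, ∑ j, (c i * a i) * (c j * a j) * Real.exp (K i j) :=
        exp_entry_pos K B hB (fun i => c i * a i)
    _ = ∑ i, ∑ j, c i * c j * Real.exp (-t * ψ (x i) (x j)) :=
        Finset.sum_congr rfl fun i _ => Finset.sum_congr rfl fun j _ => (hpoint i j).symm

theorem schoenberg_negdef_iff_exp_posdef
    {X : Type*} [Nonempty X] (ψ : X → X → ℝ) (hsym : ∀ x y, ψ x y = ψ y x) :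
    IsNegDefKernel ψ ↔
      ∀ t : ℝ, 0 < t → IsPosDefKernel (fun x y => Real.exp (-t * ψ x y)) := by
  constructor
  · intro hnd t ht
    exact ⟨fun x y => by show Real.exp (-t * ψ x y) = Real.exp (-t * ψ y x); rw [hsym x y],
      fun n x c => hard_dir ψ hsym hnd t ht n x c⟩
  · intro h
    refine ⟨hsym, fun n x c hc => ?_⟩
    set g : ℝ → ℝ := fun t => ∑ i, ∑ j, c i * c j * Real.exp (-t * ψ (x i) (x j)) with hg
    have hder : HasDerivAt g (∑ i, ∑ j, c i * c j * (-ψ (x i) (x j))) 0 := by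
      refine HasDerivAt.fun_sum fun i _ => ?_
      refine HasDerivAt.fun_sum fun j _ => ?_
      have h1 : HasDerivAt (fun s : ℝ => -s * ψ (x i) (x j)) (-ψ (x i) (x j)) 0 := by
        simpa using (hasDerivAt_id (0:ℝ)).neg.mul_const (ψ (x i) (x j))
      have h2 := h1.exp
      simpa using h2.const_mul (c i * c j)
    have hg0 : g 0 = 0 := by
      have : g 0 = (∑ i, c i) * (∑ j, c j) := by
        simp only [hg, neg_zero, zero_mul, Real.exp_zero, mul_one]
        rw [Fintype.sum_mul_sum]
      rw [this, hc, zero_mul]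
    have hslope := hasDerivAt_iff_tendsto_slope.mp hder
    have hslope' : Filter.Tendsto (slope g 0) (nhdsWithin 0 (Set.Ioi 0))
        (nhds (∑ i, ∑ j, c i * c j * (-ψ (x i) (x j)))) :=
      hslope.mono_left (nhdsWithin_mono 0 fun s hs => hs.ne')
    have hnonneg : ∀ᶠ s in nhdsWithin 0 (Set.Ioi 0), 0 ≤ slope g 0 s := by
      filter_upwards [self_mem_nhdsWithin] with s hs
      rw [slope_def_field, hg0, sub_zero, sub_zero]
      exact div_nonneg ((h s hs).2 n x c) (le_of_lt hs)
    have hd : 0 ≤ ∑ i, ∑ j, c i * c j * (-ψ (x i) (x j)) :=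
      ge_of_tendsto hslope' hnonneg
    have : ∑ i, ∑ j, c i * c j * (-ψ (x i) (x j))
        = -∑ i, ∑ j, c i * c j * ψ (x i) (x j) := by
      simp [Finset.sum_neg_distrib, mul_neg]
    linarith [this ▸ hd]
end

section
/- Let k : X × X → ℝ be a positive definite kernel on a nonempty set X with k(x,y) > 0 for all x,y ∈ X. Then the following conditions are equivalent: (i) k is infinitely divisible, i.e., for every n ≥ 1 there exists a nonnegative positive definite kernel kₙ with kₙⁿ = k pointwise; (ii) the function (x,y) ↦ −log k(x,y) is a negative definite kernel on X; (iii) for every real t > 0, the pointwise power (x,y) ↦ k(x,y)^t is a positive definite kernel on X. -/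
section Aux

variable {X : Type*}

lemma posdef_congr {K1 K2 : X → X → ℝ} (h : ∀ x y, K1 x y = K2 x y)
    (hK : IsPosDefKernel K1) : IsPosDefKernel K2 := by
  have : K1 = K2 := funext fun x => funext fun y => h x y
  rwa [← this]

lemma posdef_one : IsPosDefKernel (fun _ _ : X => (1 : ℝ)) := by
  refine ⟨fun _ _ => rfl, fun n x c => ?_⟩
  have : ∑ i, ∑ j, c i * c j * 1 = (∑ i, c i) * (∑ j, c j) := by
    rw [Finset.sum_mul_sum]
    exact Finset.sum_congr rfl fun i _ => Finset.sum_congr rfl fun j _ => by ring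
  rw [this]
  exact mul_self_nonneg _

lemma posdef_smul {K : X → X → ℝ} (hK : IsPosDefKernel K) {a : ℝ} (ha : 0 ≤ a) :
    IsPosDefKernel (fun x y => a * K x y) := by
  refine ⟨fun x y => by dsimp only; rw [hK.1], fun n x c => ?_⟩
  have : ∑ i, ∑ j, c i * c j * (a * K (x i) (x j))
      = a * ∑ i, ∑ j, c i * c j * K (x i) (x j) := by
    rw [Finset.mul_sum]
    exact Finset.sum_congr rfl fun i _ => by
      rw [Finset.mul_sum]; exact Finset.sum_congr rfl fun j _ => by ring
  rw [this]
  exact mul_nonneg ha (hK.2 n x c)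

lemma posdef_add {K1 K2 : X → X → ℝ} (h1 : IsPosDefKernel K1) (h2 : IsPosDefKernel K2) :
    IsPosDefKernel (fun x y => K1 x y + K2 x y) := by
  refine ⟨fun x y => by dsimp only; rw [h1.1, h2.1], fun n x c => ?_⟩
  have : ∑ i, ∑ j, c i * c j * (K1 (x i) (x j) + K2 (x i) (x j))
      = (∑ i, ∑ j, c i * c j * K1 (x i) (x j)) + ∑ i, ∑ j, c i * c j * K2 (x i) (x j) := by
    rw [← Finset.sum_add_distrib]
    exact Finset.sum_congr rfl fun i _ => by
      rw [← Finset.sum_add_distrib]; exact Finset.sum_congr rfl fun j _ => by ring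
  rw [this]
  exact add_nonneg (h1.2 n x c) (h2.2 n x c)

/-- Schur product theorem, kernel form. -/
lemma posdef_mul {K1 K2 : X → X → ℝ} (h1 : IsPosDefKernel K1) (h2 : IsPosDefKernel K2) :
    IsPosDefKernel (fun x y => K1 x y * K2 x y) := by
  refine ⟨fun x y => by dsimp only; rw [h1.1, h2.1], fun n x c => ?_⟩
  set B : Matrix (Fin n) (Fin n) ℝ := Matrix.of fun i j => K2 (x i) (x j) with hBdef
  have hB : B.PosSemidef := by
    refine Matrix.posSemidef_iff_dotProduct_mulVec.mpr ⟨?_, ?_⟩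
    · ext i j
      rw [Matrix.conjTranspose_apply, hBdef]
      simp only [Matrix.of_apply, star_trivial]
      exact (h2.1 (x j) (x i))
    · intro v
      have h := h2.2 n x v
      have : dotProduct (star v) (B.mulVec v)
          = ∑ i, ∑ j, v i * v j * K2 (x i) (x j) := by
        simp only [dotProduct, Matrix.mulVec, star_trivial, Pi.star_apply,
          Matrix.of_apply, hBdef, Finset.mul_sum]
        exact Finset.sum_congr rfl fun i _ => Finset.sum_congr rfl fun j _ => by ring
      rw [this]; exact h
  obtain ⟨C, hC⟩ : ∃ C : Matrix (Fin n) (Fin n) ℝ, B = C.conjTranspose * C := by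
    open scoped MatrixOrder in
    exact ⟨CFC.sqrt B, by
      rw [← Matrix.star_eq_conjTranspose, (CFC.sqrt_nonneg B).isSelfAdjoint.star_eq,
        CFC.sqrt_mul_sqrt_self B (Matrix.nonneg_iff_posSemidef.mpr hB)]⟩
  have hK2 : ∀ i j, K2 (x i) (x j) = ∑ m, C m i * C m j := by
    intro i j
    have : B i j = (C.conjTranspose * C) i j := by rw [hC]
    simpa [Matrix.mul_apply, Matrix.conjTranspose_apply, hBdef] using this
  have key : ∑ i, ∑ j, c i * c j * (K1 (x i) (x j) * K2 (x i) (x j))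
      = ∑ m, ∑ i, ∑ j, (c i * C m i) * (c j * C m j) * K1 (x i) (x j) := by
    have step : ∀ i, ∑ j, c i * c j * (K1 (x i) (x j) * K2 (x i) (x j))
        = ∑ m, ∑ j, (c i * C m i) * (c j * C m j) * K1 (x i) (x j) := by
      intro i
      rw [Finset.sum_comm]
      exact Finset.sum_congr rfl fun j _ => by
        rw [hK2 i j, Finset.mul_sum, Finset.mul_sum]
        exact Finset.sum_congr rfl fun m _ => by ring
    rw [Finset.sum_congr rfl fun i _ => step i, Finset.sum_comm]
  rw [key]
  exact Finset.sum_nonneg fun m _ => h1.2 n x (fun i => c i * C m i)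

lemma posdef_pow {K : X → X → ℝ} (hK : IsPosDefKernel K) (m : ℕ) :
    IsPosDefKernel (fun x y => K x y ^ m) := by
  induction m with
  | zero => simpa using posdef_one (X := X)
  | succ m ih =>
      have := posdef_mul ih hK
      exact posdef_congr (fun x y => by rw [pow_succ]) this

lemma posdef_of_tendsto {K : ℕ → X → X → ℝ} {L : X → X → ℝ}
    (hK : ∀ m, IsPosDefKernel (K m))
    (hlim : ∀ x y, Filter.Tendsto (fun m => K m x y) Filter.atTop (nhds (L x y))) :
    IsPosDefKernel L := by
  constructor
  · intro x y
    exact tendsto_nhds_unique ((hlim x y).congr fun m => (hK m).1 x y) (hlim y x)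
  · intro n x c
    have htend : Filter.Tendsto
        (fun m => ∑ i, ∑ j, c i * c j * K m (x i) (x j)) Filter.atTop
        (nhds (∑ i, ∑ j, c i * c j * L (x i) (x j))) := by
      refine tendsto_finset_sum _ fun i _ => tendsto_finset_sum _ fun j _ => ?_
      exact (hlim (x i) (x j)).const_mul _
    exact ge_of_tendsto htend (Filter.Eventually.of_forall fun m => (hK m).2 n x c)

/-- Multiplying a pos def kernel by `g x * g y` keeps it pos def. -/
lemma posdef_mul_fun {K : X → X → ℝ} (hK : IsPosDefKernel K) (g : X → ℝ) :
    IsPosDefKernel (fun x y => K x y * g x * g y) := by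
  refine ⟨fun x y => by dsimp only; rw [hK.1]; ring, fun n x c => ?_⟩
  have h := hK.2 n x (fun i => c i * g (x i))
  have : ∑ i, ∑ j, (c i * g (x i)) * (c j * g (x j)) * K (x i) (x j)
      = ∑ i, ∑ j, c i * c j * (K (x i) (x j) * g (x i) * g (x j)) :=
    Finset.sum_congr rfl fun i _ => Finset.sum_congr rfl fun j _ => by ring
  rw [this] at h
  exact h

lemma aux_lim (a : ℝ) :
    Filter.Tendsto (fun N : ℕ => (N : ℝ) * (1 - Real.exp (a / N))) Filter.atTop
      (nhds (-a)) := by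
  rcases eq_or_ne a 0 with rfl | ha
  · simpa using tendsto_const_nhds (α := ℝ) (f := Filter.atTop (α := ℕ)) (a := 0)
      |>.congr' (by filter_upwards [Filter.eventually_ge_atTop 1] with N hN; simp)
  · have h1 : Filter.Tendsto (fun N : ℕ => a / N) Filter.atTop (nhdsWithin 0 {(0:ℝ)}ᶜ) := by
      refine tendsto_nhdsWithin_of_tendsto_nhds_of_eventually_within _
        (tendsto_const_div_atTop_nhds_zero_nat a) ?_
      filter_upwards [Filter.eventually_ge_atTop 1] with N hN
      have : (N : ℝ) ≠ 0 := by positivity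
      simp only [Set.mem_compl_iff, Set.mem_singleton_iff]
      exact div_ne_zero ha this
    have h2 : Filter.Tendsto (slope Real.exp 0) (nhdsWithin 0 {(0:ℝ)}ᶜ) (nhds 1) := by
      have := (Real.hasDerivAt_exp 0)
      rw [hasDerivAt_iff_tendsto_slope] at this
      simpa using this
    have h3 := (h2.comp h1).const_mul (-a)
    rw [mul_one] at h3
    refine h3.congr' ?_
    filter_upwards [Filter.eventually_ge_atTop 1] with N hN
    have hN0 : (N : ℝ) ≠ 0 := by positivity
    simp only [Function.comp, slope_def_field, Real.exp_zero]
    field_simp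
    linear_combination (1 - Real.exp (a / ↑N)) * mul_inv_cancel₀ ha

end Aux

theorem infinitely_divisible_tfae
    {X : Type*} [Nonempty X] (k : X → X → ℝ)
    (hk : IsPosDefKernel k) (hpos : ∀ x y, 0 < k x y) :
    List.TFAE [
      -- (i) k is infinitely divisible
      ∀ n : ℕ, 1 ≤ n → ∃ kn : X → X → ℝ,
        (∀ x y, 0 ≤ kn x y) ∧ IsPosDefKernel kn ∧ ∀ x y, (kn x y) ^ n = k x y,
      -- (ii) -log k is a negative definite kernel
      IsNegDefKernel (fun x y => - Real.log (k x y)),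
      -- (iii) every positive real power of k is positive definite
      ∀ t : ℝ, 0 < t → IsPosDefKernel (fun x y => (k x y) ^ t)] := by
  tfae_have 3 → 1 := by
    intro h3 n hn
    have hn0 : n ≠ 0 := by omega
    refine ⟨fun x y => k x y ^ ((n : ℝ)⁻¹), fun x y => Real.rpow_nonneg (hpos x y).le _,
      h3 _ (by positivity), fun x y => Real.rpow_inv_natCast_pow (hpos x y).le hn0⟩
  tfae_have 1 → 2 := by
    intro h1
    refine ⟨fun x y => by dsimp only; rw [hk.1], fun n x c hc => ?_⟩
    -- key bound for each N ≥ 1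
    have key : ∀ N : ℕ, 1 ≤ N →
        ∑ i, ∑ j, c i * c j * ((N : ℝ) * (1 - Real.exp (Real.log (k (x i) (x j)) / N))) ≤ 0 := by
      intro N hN
      obtain ⟨kN, hnn, hpd, hpow⟩ := h1 N hN
      have hNne : N ≠ 0 := by omega
      have hkNpos : ∀ a b, 0 < kN a b := by
        intro a b
        rcases (hnn a b).lt_or_eq with h | h
        · exact h
        · exfalso
          have : kN a b ^ N = k a b := hpow a b
          rw [← h, zero_pow hNne] at this
          exact (hpos a b).ne' this.symm
      have hkeq : ∀ a b, kN a b = Real.exp (Real.log (k a b) / N) := by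
        intro a b
        have hlog : Real.log (k a b) = N * Real.log (kN a b) := by
          rw [← hpow a b, Real.log_pow]
        rw [hlog]
        rw [mul_div_cancel_left₀ _ (by exact_mod_cast hNne : (N:ℝ) ≠ 0)]
        exact (Real.exp_log (hkNpos a b)).symm
      have step : ∀ i, ∑ j, c i * c j * ((N : ℝ) * (1 - kN (x i) (x j)))
          = -((N : ℝ) * ∑ j, c i * c j * kN (x i) (x j)) := by
        intro i
        have e1 : ∑ j, c i * c j * ((N : ℝ) * (1 - kN (x i) (x j)))
            = ∑ j, (c j * (c i * N) - (N : ℝ) * (c i * c j * kN (x i) (x j))) :=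
          Finset.sum_congr rfl fun j _ => by ring
        rw [e1, Finset.sum_sub_distrib, ← Finset.sum_mul, ← Finset.mul_sum, hc]
        ring
      calc ∑ i, ∑ j, c i * c j * ((N : ℝ) * (1 - Real.exp (Real.log (k (x i) (x j)) / N)))
          = ∑ i, ∑ j, c i * c j * ((N : ℝ) * (1 - kN (x i) (x j))) := by
            exact Finset.sum_congr rfl fun i _ => Finset.sum_congr rfl fun j _ => by
              rw [hkeq]
        _ = ∑ i, -((N : ℝ) * ∑ j, c i * c j * kN (x i) (x j)) :=
            Finset.sum_congr rfl fun i _ => step i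
        _ = -((N : ℝ) * ∑ i, ∑ j, c i * c j * kN (x i) (x j)) := by
            rw [Finset.sum_neg_distrib, ← Finset.mul_sum]
        _ ≤ 0 := by
            have := hpd.2 n x c
            have hN0 : (0:ℝ) ≤ N := Nat.cast_nonneg N
            nlinarith
    have htend : Filter.Tendsto
        (fun N : ℕ => ∑ i, ∑ j, c i * c j * ((N : ℝ) * (1 - Real.exp (Real.log (k (x i) (x j)) / N))))
        Filter.atTop
        (nhds (∑ i, ∑ j, c i * c j * (- Real.log (k (x i) (x j))))) := by
      refine tendsto_finset_sum _ fun i _ => tendsto_finset_sum _ fun j _ => ?_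
      exact (aux_lim (Real.log (k (x i) (x j)))).const_mul _
    exact le_of_tendsto htend ((Filter.eventually_ge_atTop 1).mono key)
  tfae_have 2 → 3 := by
    intro h2 t ht
    obtain ⟨x0⟩ := ‹Nonempty X›
    set ψ : X → X → ℝ := fun x y => - Real.log (k x y) with hψdef
    have hψsymm : ∀ x y, ψ x y = ψ y x := h2.1
    set φ : X → X → ℝ := fun x y => ψ x x0 + ψ y x0 - ψ x y - ψ x0 x0 with hφdef
    have hφ : IsPosDefKernel φ := by
      refine ⟨fun x y => by simp only [hφdef]; rw [hψsymm x y]; ring, fun n x c => ?_⟩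
      set s : ℝ := ∑ i, c i with hs
      set S : ℝ := ∑ i, c i * ψ (x i) x0 with hS
      set D : ℝ := ∑ i, ∑ j, c i * c j * ψ (x i) (x j) with hD
      have h0 : D - 2 * (s * S) + s * s * ψ x0 x0 ≤ 0 := by
        set c' : Fin (n+1) → ℝ := Fin.cons (-s) c with hc'
        set x' : Fin (n+1) → X := Fin.cons x0 x with hx'
        have hsum : (∑ i : Fin (n+1), c' i) = 0 := by
          rw [hc', Fin.sum_univ_succ]
          simp [hs]
        have h := h2.2 (n+1) x' c' hsum
        have expand : ∑ i : Fin (n+1), ∑ j : Fin (n+1),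
            c' i * c' j * ψ (x' i) (x' j)
            = D - 2 * (s * S) + s * s * ψ x0 x0 := by
          rw [hc', hx']
          rw [Fin.sum_univ_succ]
          simp only [Fin.cons_zero, Fin.cons_succ]
          rw [Fin.sum_univ_succ]
          simp only [Fin.cons_zero, Fin.cons_succ]
          have e1 : ∑ j, -s * c j * ψ x0 (x j) = -s * S := by
            rw [hS, Finset.mul_sum]
            exact Finset.sum_congr rfl fun j _ => by rw [hψsymm x0 (x j)]; ring
          have e2 : ∀ i, ∑ j : Fin (n+1), c i * (Fin.cons (-s) c : Fin (n+1) → ℝ) j *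
              ψ (x i) ((Fin.cons x0 x : Fin (n+1) → X) j)
              = c i * (-s) * ψ (x i) x0 + ∑ j, c i * c j * ψ (x i) (x j) := by
            intro i
            rw [Fin.sum_univ_succ]
            simp only [Fin.cons_zero, Fin.cons_succ]
          rw [e1]
          rw [Finset.sum_congr rfl fun i _ => e2 i, Finset.sum_add_distrib]
          have e3 : ∑ i, c i * (-s) * ψ (x i) x0 = -s * S := by
            rw [hS, Finset.mul_sum]
            exact Finset.sum_congr rfl fun i _ => by ring
          rw [e3, ← hD]
          ring
        rw [expand] at h
        exact h
      have target : ∑ i, ∑ j, c i * c j * φ (x i) (x j)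
          = 2 * (s * S) - D - s * s * ψ x0 x0 := by
        have erow : ∀ i, ∑ j, c i * c j * φ (x i) (x j)
            = (c i * ψ (x i) x0) * s + c i * S
              - (∑ j, c i * c j * ψ (x i) (x j)) - c i * s * ψ x0 x0 := by
          intro i
          have : ∀ j, c i * c j * φ (x i) (x j)
              = c j * (c i * ψ (x i) x0) + c i * (c j * ψ (x j) x0)
                - c i * c j * ψ (x i) (x j) - c j * (c i * ψ x0 x0) := by
            intro j; simp only [hφdef]; ring
          rw [Finset.sum_congr rfl fun j _ => this j]
          rw [Finset.sum_sub_distrib, Finset.sum_sub_distrib, Finset.sum_add_distrib,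
            ← Finset.sum_mul, ← Finset.mul_sum, ← Finset.sum_mul, ← hs, ← hS]
          ring
        rw [Finset.sum_congr rfl fun i _ => erow i]
        have t1 : ∑ i, c i * S = s * S := by rw [hs, Finset.sum_mul]
        have t2 : ∑ i, c i * s * ψ x0 x0 = s * s * ψ x0 x0 := by
          rw [show s * s * ψ x0 x0 = (∑ i, c i) * (s * ψ x0 x0) by rw [← hs]; ring,
            Finset.sum_mul]
          exact Finset.sum_congr rfl fun i _ => by ring
        rw [Finset.sum_sub_distrib, Finset.sum_sub_distrib, Finset.sum_add_distrib,
          ← Finset.sum_mul, ← hS, ← hD, t1, t2]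
        ring
      rw [target]
      linarith
    -- exp (t * φ) is pos def
    have hE : IsPosDefKernel (fun x y => Real.exp (t * φ x y)) := by
      refine posdef_of_tendsto (K := fun m x y => (1 + (t / m) * φ x y) ^ m) ?_ ?_
      · intro m
        exact posdef_pow (posdef_add posdef_one
          (posdef_smul hφ (div_nonneg ht.le (Nat.cast_nonneg m)))) m
      · intro x y
        have := Real.tendsto_one_add_div_pow_exp (t * φ x y)
        refine this.congr fun m => ?_
        congr 1
        ring
    set g : X → ℝ := fun x =>
      Real.exp (t * Real.log (k x x0) - t / 2 * Real.log (k x0 x0)) with hg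
    have hfinal : IsPosDefKernel (fun x y => Real.exp (t * φ x y) * g x * g y) :=
      posdef_mul_fun hE g
    refine posdef_congr (K1 := fun x y => Real.exp (t * φ x y) * g x * g y) ?_ hfinal
    intro x y
    rw [Real.rpow_def_of_pos (hpos x y)]
    rw [hg]
    dsimp only
    rw [← Real.exp_add, ← Real.exp_add]
    congr 1
    simp only [hφdef, hψdef]
    ring
  tfae_finish
end

section
/- Let X be a nonempty set and ψ : X × X → ℝ a negative definite kernel. Then there exist a real Hilbert space H, a mapping φ : X → H, and a function f : X → ℝ such that for all x, y ∈ X, ψ(x,y) = ‖φ(x) − φ(y)‖² + f(x) + f(y). Moreover, if ψ(x,x) = 0 for all x ∈ X, then f can be chosen to be identically zero. -/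
open Finset

lemma negdef_finset {X : Type*} {ψ : X → X → ℝ} (hψ : IsNegDefKernel ψ)
    (t : Finset X) (c : X → ℝ) (hc : ∑ x ∈ t, c x = 0) :
    ∑ x ∈ t, ∑ y ∈ t, c x * c y * ψ x y ≤ 0 := by
  classical
  obtain ⟨-, h⟩ := hψ
  set e := t.equivFin with he
  have key : ∀ g : X → ℝ, ∑ i : Fin t.card, g ↑(e.symm i) = ∑ x ∈ t, g x := by
    intro g
    rw [Equiv.sum_comp e.symm (fun a : t => g ↑a)]
    exact Finset.sum_coe_sort t g
  have h2 := h t.card (fun i => ↑(e.symm i)) (fun i => c ↑(e.symm i)) (by rw [key]; exact hc)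
  calc ∑ x ∈ t, ∑ y ∈ t, c x * c y * ψ x y
      = ∑ i : Fin t.card, ∑ y ∈ t, c ↑(e.symm i) * c y * ψ (↑(e.symm i)) y := by
        rw [key (fun x => ∑ y ∈ t, c x * c y * ψ x y)]
    _ = ∑ i : Fin t.card, ∑ j : Fin t.card,
          c ↑(e.symm i) * c ↑(e.symm j) * ψ (↑(e.symm i)) (↑(e.symm j)) := by
        exact Finset.sum_congr rfl fun i _ =>
          (key (fun y => c ↑(e.symm i) * c y * ψ (↑(e.symm i)) y)).symm
    _ ≤ 0 := h2

lemma psd_aux {X : Type*} {ψ : X → X → ℝ} (hψ : IsNegDefKernel ψ) (x₀ : X)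
    (t : Finset X) (hx₀ : x₀ ∈ t) (c : X → ℝ) :
    0 ≤ ∑ x ∈ t, ∑ y ∈ t, c x * c y * ((ψ x x₀ + ψ y x₀ - ψ x y - ψ x₀ x₀) / 2) := by
  classical
  have hsymm := hψ.1
  set S : ℝ := ∑ x ∈ t, c x with hS
  set A : ℝ := ∑ x ∈ t, ∑ y ∈ t, c x * c y * ψ x y with hA
  set B1 : ℝ := ∑ x ∈ t, c x * ψ x x₀ with hB1
  set d : X → ℝ := fun z => c z - (if z = x₀ then S else 0) with hd
  have hd0 : ∑ z ∈ t, d z = 0 := by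
    simp [hd, Finset.sum_sub_distrib, Finset.sum_ite_eq' t x₀ (fun _ => S), hx₀, ← hS]
  have hP := negdef_finset hψ t d hd0
  have e1 : ∀ z ∈ t, ∑ w ∈ t, d z * d w * ψ z w
      = (∑ w ∈ t, d z * c w * ψ z w) - d z * S * ψ z x₀ := by
    intro z _
    have key : ∀ w, d z * d w * ψ z w
        = d z * c w * ψ z w - (if w = x₀ then d z * S * ψ z w else 0) := by
      intro w
      by_cases h : w = x₀ <;> simp [hd, h] <;> ring
    rw [Finset.sum_congr rfl fun w _ => key w, Finset.sum_sub_distrib,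
      Finset.sum_ite_eq' t x₀ (fun w => d z * S * ψ z w), if_pos hx₀]
  have e2 : ∀ w ∈ t, ∑ z ∈ t, d z * c w * ψ z w
      = (∑ z ∈ t, c z * c w * ψ z w) - S * c w * ψ x₀ w := by
    intro w _
    have key : ∀ z, d z * c w * ψ z w
        = c z * c w * ψ z w - (if z = x₀ then S * c w * ψ z w else 0) := by
      intro z
      by_cases h : z = x₀ <;> simp [hd, h] <;> ring
    rw [Finset.sum_congr rfl fun z _ => key z, Finset.sum_sub_distrib,
      Finset.sum_ite_eq' t x₀ (fun z => S * c w * ψ z w), if_pos hx₀]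
  have e3 : ∑ z ∈ t, d z * S * ψ z x₀
      = S * B1 - S * S * ψ x₀ x₀ := by
    have key : ∀ z, d z * S * ψ z x₀
        = S * (c z * ψ z x₀) - (if z = x₀ then S * S * ψ z x₀ else 0) := by
      intro z
      by_cases h : z = x₀ <;> simp [hd, h] <;> ring
    rw [Finset.sum_congr rfl fun z _ => key z, Finset.sum_sub_distrib,
      Finset.sum_ite_eq' t x₀ (fun z => S * S * ψ z x₀), if_pos hx₀, ← Finset.mul_sum, ← hB1]
  have e4 : ∑ w ∈ t, S * c w * ψ x₀ w = S * B1 := by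
    have key : ∀ w ∈ t, S * c w * ψ x₀ w = S * (c w * ψ w x₀) := by
      intro w _; rw [hsymm x₀ w]; ring
    rw [Finset.sum_congr rfl key, ← Finset.mul_sum, ← hB1]
  have ePexp : ∑ z ∈ t, ∑ w ∈ t, d z * d w * ψ z w
      = A - 2 * (S * B1) + S * S * ψ x₀ x₀ := by
    rw [Finset.sum_congr rfl e1, Finset.sum_sub_distrib, e3]
    rw [show ∑ z ∈ t, ∑ w ∈ t, d z * c w * ψ z w
        = ∑ w ∈ t, ∑ z ∈ t, d z * c w * ψ z w from Finset.sum_comm]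
    rw [Finset.sum_congr rfl e2, Finset.sum_sub_distrib, e4]
    rw [show ∑ w ∈ t, ∑ z ∈ t, c z * c w * ψ z w
        = ∑ z ∈ t, ∑ w ∈ t, c z * c w * ψ z w from Finset.sum_comm, ← hA]
    ring
  have g1 : ∑ x ∈ t, ∑ y ∈ t, c x * c y * ψ x x₀ = B1 * S := by
    rw [hB1, hS, Finset.sum_mul]
    refine Finset.sum_congr rfl fun x _ => ?_
    rw [Finset.mul_sum]
    exact Finset.sum_congr rfl fun y _ => by ring
  have g2 : ∑ x ∈ t, ∑ y ∈ t, c x * c y * ψ y x₀ = S * B1 := by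
    rw [hS, Finset.sum_mul]
    refine Finset.sum_congr rfl fun x _ => ?_
    rw [hB1, Finset.mul_sum]
    exact Finset.sum_congr rfl fun y _ => by ring
  have g4 : ∑ x ∈ t, ∑ y ∈ t, c x * c y * ψ x₀ x₀ = S * S * ψ x₀ x₀ := by
    have hx : ∀ x ∈ t, ∑ y ∈ t, c x * c y * ψ x₀ x₀ = c x * (S * ψ x₀ x₀) := by
      intro x _
      rw [hS, Finset.sum_mul, Finset.mul_sum]
      exact Finset.sum_congr rfl fun y _ => by ring
    rw [Finset.sum_congr rfl hx, ← Finset.sum_mul, ← hS, mul_assoc]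
  have expand : ∀ x y : X, c x * c y * ((ψ x x₀ + ψ y x₀ - ψ x y - ψ x₀ x₀) / 2)
      = (c x * c y * ψ x x₀ + c x * c y * ψ y x₀
          - c x * c y * ψ x y - c x * c y * ψ x₀ x₀) / 2 := fun x y => by ring
  have goal_eq : ∑ x ∈ t, ∑ y ∈ t, c x * c y * ((ψ x x₀ + ψ y x₀ - ψ x y - ψ x₀ x₀) / 2)
      = (B1 * S + S * B1 - A - S * S * ψ x₀ x₀) / 2 := by
    simp only [expand, ← Finset.sum_div, Finset.sum_sub_distrib, Finset.sum_add_distrib]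
    rw [g1, g2, g4, ← hA]
  rw [ePexp] at hP
  rw [goal_eq]
  linarith

universe u

lemma decomposition {X : Type u} [Nonempty X] (ψ : X → X → ℝ) (hψ : IsNegDefKernel ψ) :
    ∃ (H : Type u) (_ : NormedAddCommGroup H) (_ : InnerProductSpace ℝ H)
        (_ : CompleteSpace H) (φ : X → H),
      ∀ x y, ψ x y = ‖φ x - φ y‖ ^ 2 + ψ x x / 2 + ψ y y / 2 := by
  classical
  obtain ⟨x₀⟩ := ‹Nonempty X›
  have hsymm := hψ.1
  set K : X → X → ℝ := fun x y => (ψ x x₀ + ψ y x₀ - ψ x y - ψ x₀ x₀) / 2 with hK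
  set L : (X →₀ ℝ) →ₗ[ℝ] (X →₀ ℝ) →ₗ[ℝ] ℝ :=
    Finsupp.linearCombination ℝ (fun x => Finsupp.linearCombination ℝ (K x)) with hL
  have L_apply : ∀ u v : X →₀ ℝ, L u v
      = ∑ x ∈ u.support, ∑ y ∈ v.support, u x * (v y * K x y) := by
    intro u v
    rw [hL, Finsupp.linearCombination_apply, Finsupp.sum]
    simp only [LinearMap.coe_sum, Finset.sum_apply, LinearMap.smul_apply, smul_eq_mul,
      Finsupp.linearCombination_apply, Finsupp.sum, Finset.mul_sum, smul_eq_mul]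
  have hKsymm : ∀ x y, K x y = K y x := by
    intro x y
    simp only [hK]
    rw [hsymm x y]
    ring
  have Lsymm : ∀ u v : X →₀ ℝ, L u v = L v u := by
    intro u v
    rw [L_apply, L_apply, Finset.sum_comm]
    refine Finset.sum_congr rfl fun y _ => Finset.sum_congr rfl fun x _ => ?_
    rw [hKsymm x y]
    ring
  have Lnonneg : ∀ u : X →₀ ℝ, 0 ≤ L u u := by
    intro u
    rw [L_apply]
    set t : Finset X := insert x₀ u.support with ht
    have hsub : u.support ⊆ t := Finset.subset_insert _ _
    have step1 : ∀ x : X, ∑ y ∈ u.support, u x * (u y * K x y)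
        = ∑ y ∈ t, u x * (u y * K x y) := by
      intro x
      refine Finset.sum_subset hsub fun y _ hy => ?_
      rw [Finsupp.notMem_support_iff.mp hy]
      ring
    have step2 : ∑ x ∈ u.support, ∑ y ∈ t, u x * (u y * K x y)
        = ∑ x ∈ t, ∑ y ∈ t, u x * (u y * K x y) := by
      refine Finset.sum_subset hsub fun x _ hx => ?_
      rw [Finsupp.notMem_support_iff.mp hx]
      simp
    rw [Finset.sum_congr rfl fun x _ => step1 x, step2]
    have := psd_aux hψ x₀ t (Finset.mem_insert_self _ _) u
    refine le_trans this (le_of_eq ?_)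
    exact Finset.sum_congr rfl fun x _ => Finset.sum_congr rfl fun y _ => by
      simp only [hK]; ring
  letI pc : PreInnerProductSpace.Core ℝ (X →₀ ℝ) :=
    { inner := fun u v => L u v
      conj_inner_symm := fun u v => by simpa using Lsymm v u
      re_inner_nonneg := fun u => by simpa using Lnonneg u
      add_left := fun u v w => by simp
      smul_left := fun u v r => by simp }
  letI : Inner ℝ (X →₀ ℝ) := pc.toInner
  letI : SeminormedAddCommGroup (X →₀ ℝ) := InnerProductSpace.Core.toSeminormedAddCommGroup (c := pc)
  letI : NormedSpace ℝ (X →₀ ℝ) := InnerProductSpace.Core.toNormedSpace (c := pc)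
  letI : InnerProductSpace ℝ (X →₀ ℝ) :=
    { norm_sq_eq_re_inner := fun u => Real.sq_sqrt (pc.re_inner_nonneg u)
      conj_inner_symm := pc.conj_inner_symm
      add_left := pc.add_left
      smul_left := pc.smul_left }
  refine ⟨UniformSpace.Completion (X →₀ ℝ), inferInstance, inferInstance, inferInstance,
    fun x => ↑(Finsupp.single x (1 : ℝ)), ?_⟩
  intro x y
  have hsingle : ∀ a b : X, (inner ℝ (Finsupp.single a (1 : ℝ)) (Finsupp.single b (1 : ℝ)) : ℝ)
      = K a b := by
    intro a b
    show L _ _ = _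
    simp [hL, Finsupp.linearCombination_single]
  have hnorm : ‖(↑(Finsupp.single x (1 : ℝ)) : UniformSpace.Completion (X →₀ ℝ))
      - ↑(Finsupp.single y (1 : ℝ))‖ ^ 2
      = ‖(Finsupp.single x (1 : ℝ) - Finsupp.single y (1 : ℝ) : X →₀ ℝ)‖ ^ 2 := by
    rw [← UniformSpace.Completion.coe_sub, UniformSpace.Completion.norm_coe]
  rw [hnorm, norm_sub_sq_real, ← real_inner_self_eq_norm_sq, ← real_inner_self_eq_norm_sq,
    hsingle, hsingle, hsingle]
  simp only [hK]
  ring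

theorem negdef_hilbert_decomposition
    {X : Type u} [Nonempty X] (ψ : X → X → ℝ) (hψ : IsNegDefKernel ψ) :
    (∃ (H : Type u) (_ : NormedAddCommGroup H) (_ : InnerProductSpace ℝ H)
        (_ : CompleteSpace H) (φ : X → H) (f : X → ℝ),
      ∀ x y, ψ x y = ‖φ x - φ y‖ ^ 2 + f x + f y) ∧
    ((∀ x, ψ x x = 0) →
      ∃ (H : Type u) (_ : NormedAddCommGroup H) (_ : InnerProductSpace ℝ H)
          (_ : CompleteSpace H) (φ : X → H),
        ∀ x y, ψ x y = ‖φ x - φ y‖ ^ 2) := by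
  obtain ⟨H, i1, i2, i3, φ, hφ⟩ := decomposition ψ hψ
  constructor
  · exact ⟨H, i1, i2, i3, φ, fun x => ψ x x / 2, hφ⟩
  · intro h0
    refine ⟨H, i1, i2, i3, φ, fun x y => ?_⟩
    have := hφ x y
    rw [h0 x, h0 y] at this
    simpa using this
end

section
/- Let X be a nonempty set and ψ : X × X → ℝ a negative definite kernel with ψ ≥ 0 pointwise, such that the set of pairs (x,y) with ψ(x,y) = 0 is exactly the diagonal {(x,x) : x ∈ X}. Then the function d(x,y) = √(ψ(x,y)) is a distance on X: d(x,y) ≥ 0 with equality iff x = y, d(x,y) = d(y,x), and d(x,z) ≤ d(x,y) + d(y,z) for all x, y, z ∈ X. -/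
theorem sqrt_negdef_is_distance
    {X : Type*} [Nonempty X] (ψ : X → X → ℝ) (hψ : IsNegDefKernel ψ)
    (hnonneg : ∀ x y, 0 ≤ ψ x y)
    (hzero : ∀ x y, ψ x y = 0 ↔ x = y) :
    (∀ x y, 0 ≤ Real.sqrt (ψ x y)) ∧
    (∀ x y, Real.sqrt (ψ x y) = 0 ↔ x = y) ∧
    (∀ x y, Real.sqrt (ψ x y) = Real.sqrt (ψ y x)) ∧
    (∀ x y z, Real.sqrt (ψ x z) ≤ Real.sqrt (ψ x y) + Real.sqrt (ψ y z)) := by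
  obtain ⟨hsym, hneg⟩ := hψ
  have hdiag : ∀ x, ψ x x = 0 := fun x => (hzero x x).mpr rfl
  refine ⟨fun x y => Real.sqrt_nonneg _, ?_, ?_, ?_⟩
  · intro x y
    rw [← hzero x y, Real.sqrt_eq_zero (hnonneg x y)]
  · intro x y; rw [hsym]
  · intro x y z
    have key : ∀ t : ℝ, t * ψ x z ≤ (1 + t) * ψ x y + t * (1 + t) * ψ y z := by
      intro t
      have h := hneg 3 ![x, y, z] ![1, -(1 + t), t] (by
        simp [Fin.sum_univ_three])
      simp only [Fin.sum_univ_three, Matrix.cons_val_zero, Matrix.cons_val_one,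
        Matrix.head_cons, Matrix.cons_val_two, Matrix.tail_cons, hdiag] at h
      have h1 := hsym x y
      have h2 := hsym x z
      have h3 := hsym y z
      nlinarith [h]
    by_cases ha : ψ x y = 0
    · have hxy : x = y := (hzero x y).mp ha
      subst hxy
      simp [ha]
    by_cases hb : ψ y z = 0
    · have hyz : y = z := (hzero y z).mp hb
      subst hyz
      simp [hb]
    have ha' : 0 < ψ x y := lt_of_le_of_ne (hnonneg x y) (Ne.symm ha)
    have hb' : 0 < ψ y z := lt_of_le_of_ne (hnonneg y z) (Ne.symm hb)
    have sa : 0 < Real.sqrt (ψ x y) := Real.sqrt_pos.mpr ha'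
    have sb : 0 < Real.sqrt (ψ y z) := Real.sqrt_pos.mpr hb'
    set t : ℝ := Real.sqrt (ψ x y) / Real.sqrt (ψ y z) with ht
    have htpos : 0 < t := div_pos sa sb
    have hkey := key t
    have hsa : Real.sqrt (ψ x y) ^ 2 = ψ x y := Real.sq_sqrt (hnonneg x y)
    have hsb : Real.sqrt (ψ y z) ^ 2 = ψ y z := Real.sq_sqrt (hnonneg y z)
    have htb : t * Real.sqrt (ψ y z) = Real.sqrt (ψ x y) := by
      rw [ht]
      field_simp [sb.ne']
    have hc : ψ x z ≤ (Real.sqrt (ψ x y) + Real.sqrt (ψ y z)) ^ 2 := by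
      have h4 : t * ψ y z = Real.sqrt (ψ x y) * Real.sqrt (ψ y z) := by
        linear_combination Real.sqrt (ψ y z) * htb - t * hsb
      have h5 : t ^ 2 * ψ y z = ψ x y := by
        linear_combination (t * Real.sqrt (ψ y z) + Real.sqrt (ψ x y)) * htb
          - t ^ 2 * hsb + hsa
      have h2 : t * ψ x z ≤ t * (Real.sqrt (ψ x y) + Real.sqrt (ψ y z)) ^ 2 := by
        nlinarith [hkey, h4, h5, hsa, hsb]
      exact le_of_mul_le_mul_left h2 htpos
    calc Real.sqrt (ψ x z)
        ≤ Real.sqrt ((Real.sqrt (ψ x y) + Real.sqrt (ψ y z)) ^ 2) :=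
          Real.sqrt_le_sqrt hc
      _ = Real.sqrt (ψ x y) + Real.sqrt (ψ y z) := by
          rw [Real.sqrt_sq (by positivity)]
end

section
/- Let ψ : X × X → ℝ be a negative definite kernel on a nonempty set X with ψ(x,y) ≥ 0 for all x, y ∈ X. Then for every α with 0 < α < 1, the pointwise power (x,y) ↦ ψ(x,y)^α is a negative definite kernel on X, and the function (x,y) ↦ log(1 + ψ(x,y)) is also a negative definite kernel on X. -/
open MeasureTheory Real Filter Set
open scoped MatrixOrder

namespace NegDefAux


def Pos {n : ℕ} (A : Fin n → Fin n → ℝ) : Prop :=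
  ∀ c : Fin n → ℝ, 0 ≤ ∑ i, ∑ j, c i * c j * A i j

lemma pos_one {n : ℕ} : Pos (fun _ _ : Fin n => (1:ℝ)) := by
  intro c
  have h := mul_self_nonneg (∑ i, c i)
  rw [Finset.sum_mul_sum] at h
  simpa using h

lemma gram {n : ℕ} {A : Fin n → Fin n → ℝ} (hsymm : ∀ i j, A i j = A j i) (hA : Pos A) :
    ∃ v : Fin n → Fin n → ℝ, ∀ i j, A i j = ∑ m, v i m * v j m := by
  set M : Matrix (Fin n) (Fin n) ℝ := Matrix.of A with hM
  have hHerm : M.IsHermitian := by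
    ext i j
    simp [hM, Matrix.conjTranspose_apply, hsymm j i]
  have hPSD : M.PosSemidef := by
    refine Matrix.PosSemidef.of_dotProduct_mulVec_nonneg hHerm fun c => ?_
    have h := hA c
    have : dotProduct (star c) (M.mulVec c) = ∑ i, ∑ j, c i * c j * A i j := by
      simp only [dotProduct, Matrix.mulVec, star_trivial, Finset.mul_sum]
      refine Finset.sum_congr rfl fun i _ => Finset.sum_congr rfl fun j _ => ?_
      simp [hM]; ring
    rw [this]; exact h
  refine ⟨fun i m => (CFC.sqrt M) i m, fun i j => ?_⟩
  have hsq := CFC.sqrt_mul_sqrt_self M hPSD.nonneg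
  have hsymS : ∀ a b, (CFC.sqrt M) a b = (CFC.sqrt M) b a := by
    intro a b
    have := (Matrix.nonneg_iff_posSemidef.mp (CFC.sqrt_nonneg M)).1
    conv_lhs => rw [← this]
    simp [Matrix.conjTranspose_apply]
  have : A i j = (CFC.sqrt M * CFC.sqrt M) i j := by rw [hsq]; simp [hM]
  rw [this, Matrix.mul_apply]
  exact Finset.sum_congr rfl fun m _ => by rw [hsymS m j]





lemma pos_mul {n : ℕ} {A B : Fin n → Fin n → ℝ} (hA : Pos A)
    (hBs : ∀ i j, B i j = B j i) (hB : Pos B) :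
    Pos (fun i j => A i j * B i j) := by
  obtain ⟨v, hv⟩ := gram hBs hB
  intro c
  calc (0:ℝ) ≤ ∑ m, ∑ i, ∑ j, (c i * v i m) * (c j * v j m) * A i j :=
        Finset.sum_nonneg fun m _ => hA (fun i => c i * v i m)
    _ = ∑ i, ∑ m, ∑ j, (c i * v i m) * (c j * v j m) * A i j := Finset.sum_comm
    _ = ∑ i, ∑ j, ∑ m, (c i * v i m) * (c j * v j m) * A i j :=
        Finset.sum_congr rfl fun i _ => Finset.sum_comm
    _ = ∑ i, ∑ j, c i * c j * (A i j * B i j) := by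
        refine Finset.sum_congr rfl fun i _ => Finset.sum_congr rfl fun j _ => ?_
        rw [hv i j, Finset.mul_sum, Finset.mul_sum]
        exact (Finset.sum_congr rfl fun m _ => by ring).symm

lemma pos_pow {n : ℕ} {A : Fin n → Fin n → ℝ} (hAs : ∀ i j, A i j = A j i) (hA : Pos A) :
    ∀ k : ℕ, Pos (fun i j => A i j ^ k) := by
  intro k
  induction k with
  | zero => simpa using pos_one
  | succ k ih =>
      have := pos_mul ih hAs hA
      simpa [pow_succ] using this

lemma pos_exp {n : ℕ} {A : Fin n → Fin n → ℝ} (hAs : ∀ i j, A i j = A j i) (hA : Pos A) :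
    Pos (fun i j => Real.exp (A i j)) := by
  intro c
  have hN : ∀ N : ℕ, 0 ≤ ∑ i, ∑ j, c i * c j * (∑ k ∈ Finset.range N, A i j ^ k / ((Nat.factorial k : ℕ) : ℝ)) := by
    intro N
    have h1 : ∑ i, ∑ j, c i * c j * (∑ k ∈ Finset.range N, A i j ^ k / ((Nat.factorial k : ℕ) : ℝ))
        = ∑ k ∈ Finset.range N, (∑ i, ∑ j, c i * c j * A i j ^ k) / ((Nat.factorial k : ℕ) : ℝ) := by
      simp only [Finset.mul_sum, Finset.sum_div]
      rw [show (∑ i, ∑ j, ∑ k ∈ Finset.range N, c i * c j * (A i j ^ k / ((Nat.factorial k : ℕ) : ℝ)))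
          = ∑ i, ∑ k ∈ Finset.range N, ∑ j, c i * c j * (A i j ^ k / ((Nat.factorial k : ℕ) : ℝ)) from
        Finset.sum_congr rfl fun i _ => Finset.sum_comm, Finset.sum_comm]
      exact Finset.sum_congr rfl fun k _ => Finset.sum_congr rfl fun i _ =>
        Finset.sum_congr rfl fun j _ => by ring
    rw [h1]
    exact Finset.sum_nonneg fun k _ =>
      div_nonneg (pos_pow hAs hA k c) (Nat.cast_nonneg _)
  have hT : Tendsto (fun N => ∑ i, ∑ j, c i * c j * (∑ k ∈ Finset.range N, A i j ^ k / ((Nat.factorial k : ℕ) : ℝ)))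
      atTop (nhds (∑ i, ∑ j, c i * c j * Real.exp (A i j))) := by
    refine tendsto_finset_sum _ fun i _ => tendsto_finset_sum _ fun j _ => ?_
    refine Tendsto.const_mul _ ?_
    have : HasSum (fun k : ℕ => A i j ^ k / ((Nat.factorial k : ℕ) : ℝ)) (Real.exp (A i j)) := by
      rw [Real.exp_eq_exp_ℝ]
      exact NormedSpace.expSeries_div_hasSum_exp (A i j)
    exact this.tendsto_sum_nat
  exact ge_of_tendsto hT (Filter.Eventually.of_forall hN)




lemma pos_phi {X : Type*} {ψ : X → X → ℝ} (hψ : IsNegDefKernel ψ) (x₀ : X)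
    {n : ℕ} (x : Fin n → X) :
    Pos (fun i j => ψ (x i) x₀ + ψ (x j) x₀ - ψ (x i) (x j) - ψ x₀ x₀) := by
  obtain ⟨hsym, hneg⟩ := hψ
  intro c
  set S := ∑ i, c i with hS
  set A := ∑ i, c i * ψ (x i) x₀ with hA
  set Q := ∑ i, ∑ j, c i * c j * ψ (x i) (x j) with hQ
  have hkey := hneg (n+1) (Fin.snoc x x₀) (Fin.snoc c (-S)) (by
    rw [Fin.sum_univ_castSucc]
    simp [hS])
  have hexp : ∑ i, ∑ j, (Fin.snoc c (-S) : Fin (n+1) → ℝ) i * (Fin.snoc c (-S) : Fin (n+1) → ℝ) j *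
      ψ ((Fin.snoc x x₀ : Fin (n+1) → X) i) ((Fin.snoc x x₀ : Fin (n+1) → X) j)
      = Q - S*A - S*A + S*S*ψ x₀ x₀ := by
    rw [Fin.sum_univ_castSucc]
    simp only [Fin.sum_univ_castSucc, Fin.snoc_castSucc, Fin.snoc_last]
    rw [Finset.sum_add_distrib]
    have e2 : ∑ i, c i * -S * ψ (x i) x₀ = -S * A := by
      rw [hA, Finset.mul_sum]
      exact Finset.sum_congr rfl fun i _ => by ring
    have e3 : ∑ j, -S * c j * ψ x₀ (x j) = -S * A := by
      rw [hA, Finset.mul_sum]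
      exact Finset.sum_congr rfl fun j _ => by rw [hsym x₀ (x j)]; ring
    rw [e2, e3, ← hQ]
    ring
  have hgoal : ∑ i, ∑ j, c i * c j *
      (ψ (x i) x₀ + ψ (x j) x₀ - ψ (x i) (x j) - ψ x₀ x₀)
      = A*S + S*A - Q - S*S*ψ x₀ x₀ := by
    have inner : ∀ i, ∑ j, c i * c j *
        (ψ (x i) x₀ + ψ (x j) x₀ - ψ (x i) (x j) - ψ x₀ x₀)
        = c i * ψ (x i) x₀ * S + c i * A - (∑ j, c i * c j * ψ (x i) (x j))
          - c i * S * ψ x₀ x₀ := by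
      intro i
      have e : ∀ j, c i * c j * (ψ (x i) x₀ + ψ (x j) x₀ - ψ (x i) (x j) - ψ x₀ x₀)
          = (c i * ψ (x i) x₀) * c j + c i * (c j * ψ (x j) x₀)
            - c i * c j * ψ (x i) (x j) - (c i * ψ x₀ x₀) * c j := fun j => by ring
      simp only [e]
      rw [Finset.sum_sub_distrib, Finset.sum_sub_distrib, Finset.sum_add_distrib,
        ← Finset.mul_sum, ← Finset.mul_sum, ← Finset.mul_sum, ← hS, ← hA]
      ring
    calc ∑ i, ∑ j, c i * c j * (ψ (x i) x₀ + ψ (x j) x₀ - ψ (x i) (x j) - ψ x₀ x₀)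
        = ∑ i, (c i * ψ (x i) x₀ * S + c i * A - (∑ j, c i * c j * ψ (x i) (x j))
            - c i * S * ψ x₀ x₀) := Finset.sum_congr rfl fun i _ => inner i
      _ = A*S + S*A - Q - S*S*ψ x₀ x₀ := by
          have e4 : ∑ i, c i * S * ψ x₀ x₀ = S * (S * ψ x₀ x₀) := by
            calc ∑ i, c i * S * ψ x₀ x₀ = ∑ i, c i * (S * ψ x₀ x₀) :=
                  Finset.sum_congr rfl fun i _ => by ring
              _ = (∑ i, c i) * (S * ψ x₀ x₀) := (Finset.sum_mul _ _ _).symm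
              _ = S * (S * ψ x₀ x₀) := by rw [← hS]
          rw [Finset.sum_sub_distrib, Finset.sum_sub_distrib, Finset.sum_add_distrib,
            e4, ← Finset.sum_mul, ← Finset.sum_mul, ← hQ, ← hA, ← hS]
          ring
  rw [hexp] at hkey
  rw [hgoal]
  linarith






lemma schoenberg {X : Type*} {ψ : X → X → ℝ} (hψ : IsNegDefKernel ψ) (x₀ : X)
    {t : ℝ} (ht : 0 ≤ t) {n : ℕ} (x : Fin n → X) (c : Fin n → ℝ) :
    0 ≤ ∑ i, ∑ j, c i * c j * Real.exp (-(t * ψ (x i) (x j))) := by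
  have hsym := hψ.1
  set Φ : Fin n → Fin n → ℝ :=
    fun i j => ψ (x i) x₀ + ψ (x j) x₀ - ψ (x i) (x j) - ψ x₀ x₀ with hΦ
  have hΦpos : Pos Φ := pos_phi hψ x₀ x
  have hΦsym : ∀ i j, t * Φ i j = t * Φ j i := by
    intro i j; rw [hΦ]; simp only; rw [hsym (x i) (x j)]; ring
  have htΦ : Pos (fun i j => t * Φ i j) := by
    intro d
    have h0 := mul_nonneg ht (hΦpos d)
    calc (0:ℝ) ≤ t * ∑ i, ∑ j, d i * d j * Φ i j := h0
      _ = ∑ i, ∑ j, d i * d j * (t * Φ i j) := by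
          rw [Finset.mul_sum]
          refine Finset.sum_congr rfl fun i _ => ?_
          rw [Finset.mul_sum]
          exact Finset.sum_congr rfl fun j _ => by ring
  have hE := pos_exp hΦsym htΦ (fun i => c i * Real.exp (-(t * ψ (x i) x₀)))
  have heq : ∑ i, ∑ j, (c i * Real.exp (-(t * ψ (x i) x₀))) * (c j * Real.exp (-(t * ψ (x j) x₀)))
        * Real.exp (t * Φ i j)
      = Real.exp (-(t * ψ x₀ x₀)) * ∑ i, ∑ j, c i * c j * Real.exp (-(t * ψ (x i) (x j))) := by
    rw [Finset.mul_sum]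
    refine Finset.sum_congr rfl fun i _ => ?_
    rw [Finset.mul_sum]
    refine Finset.sum_congr rfl fun j _ => ?_
    have harg : Real.exp (-(t * ψ (x i) x₀)) * Real.exp (-(t * ψ (x j) x₀)) * Real.exp (t * Φ i j)
        = Real.exp (-(t * ψ x₀ x₀)) * Real.exp (-(t * ψ (x i) (x j))) := by
      rw [← Real.exp_add, ← Real.exp_add, ← Real.exp_add]
      congr 1
      rw [hΦ]; ring
    calc (c i * Real.exp (-(t * ψ (x i) x₀))) * (c j * Real.exp (-(t * ψ (x j) x₀)))
          * Real.exp (t * Φ i j)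
        = c i * c j * (Real.exp (-(t * ψ (x i) x₀)) * Real.exp (-(t * ψ (x j) x₀))
            * Real.exp (t * Φ i j)) := by ring
      _ = c i * c j * (Real.exp (-(t * ψ x₀ x₀)) * Real.exp (-(t * ψ (x i) (x j)))) := by
          rw [harg]
      _ = Real.exp (-(t * ψ x₀ x₀)) * (c i * c j * Real.exp (-(t * ψ (x i) (x j)))) := by ring
  rw [heq] at hE
  exact nonneg_of_mul_nonneg_right hE (Real.exp_pos _)




lemma meas_aux {α : ℝ} (s : ℝ) :
    AEStronglyMeasurable (fun t : ℝ => (1 - Real.exp (-(t*s))) * t ^ (-1-α))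
      (volume.restrict (Ioi 0)) := by
  refine (ContinuousOn.aestronglyMeasurable ?_ measurableSet_Ioi)
  refine continuousOn_of_forall_continuousAt fun t ht => ?_
  exact ((continuous_const.sub (Real.continuous_exp.comp
    ((continuous_id.mul continuous_const).neg))).continuousAt).mul
    (Real.continuousAt_rpow_const t _ (Or.inl (ne_of_gt ht)))

lemma integrableOn_aux {α : ℝ} (h0 : 0 < α) (h1 : α < 1) {s : ℝ} (hs : 0 ≤ s) :
    IntegrableOn (fun t : ℝ => (1 - Real.exp (-(t*s))) * t ^ (-1-α)) (Ioi 0) := by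
  have hmeas := meas_aux (α := α) s
  rw [show Ioi (0:ℝ) = Ioc 0 1 ∪ Ioi 1 from (Set.Ioc_union_Ioi_eq_Ioi zero_le_one).symm]
  refine IntegrableOn.union ?_ ?_
  · have hInt : IntegrableOn (fun t : ℝ => s * t ^ (-α)) (Ioc 0 1) := by
      have h := intervalIntegral.intervalIntegrable_rpow' (a := 0) (b := 1) (r := -α)
        (by linarith)
      rw [intervalIntegrable_iff_integrableOn_Ioc_of_le zero_le_one] at h
      exact h.const_mul s
    refine hInt.mono' (hmeas.mono_measure (Measure.restrict_mono Set.Ioc_subset_Ioi_self le_rfl)) ?_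
    filter_upwards [ae_restrict_mem measurableSet_Ioc] with t ht
    have ht0 : (0:ℝ) < t := ht.1
    have h1e : 0 ≤ 1 - Real.exp (-(t*s)) := by
      have : Real.exp (-(t*s)) ≤ 1 := Real.exp_le_one_iff.mpr (by nlinarith)
      linarith
    have h2 : 1 - Real.exp (-(t*s)) ≤ t * s := by
      have := Real.add_one_le_exp (-(t*s))
      linarith
    rw [norm_mul, norm_of_nonneg h1e, norm_of_nonneg (Real.rpow_nonneg ht0.le _)]
    calc (1 - Real.exp (-(t*s))) * t ^ (-1-α) ≤ (t * s) * t ^ (-1-α) :=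
          mul_le_mul_of_nonneg_right h2 (Real.rpow_nonneg ht0.le _)
      _ = s * (t ^ (1:ℝ) * t ^ (-1-α)) := by rw [Real.rpow_one]; ring
      _ = s * t ^ (-α) := by
          rw [← Real.rpow_add ht0]
          ring_nf
  · have hInt : IntegrableOn (fun t : ℝ => t ^ (-1-α)) (Ioi 1) :=
      integrableOn_Ioi_rpow_of_lt (by linarith) one_pos
    refine hInt.mono' (hmeas.mono_measure (Measure.restrict_mono
      (Set.Ioi_subset_Ioi zero_le_one) le_rfl)) ?_
    filter_upwards [ae_restrict_mem measurableSet_Ioi] with t ht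
    have ht0 : (0:ℝ) < t := lt_trans one_pos ht
    have h1e : 0 ≤ 1 - Real.exp (-(t*s)) := by
      have : Real.exp (-(t*s)) ≤ 1 := Real.exp_le_one_iff.mpr (by nlinarith)
      linarith
    rw [norm_mul, norm_of_nonneg h1e, norm_of_nonneg (Real.rpow_nonneg ht0.le _)]
    calc (1 - Real.exp (-(t*s))) * t ^ (-1-α) ≤ 1 * t ^ (-1-α) :=
          mul_le_mul_of_nonneg_right (by have := Real.exp_pos (-(t*s)); linarith)
            (Real.rpow_nonneg ht0.le _)
      _ = t ^ (-1-α) := one_mul _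

lemma integral_scal {α : ℝ} {s : ℝ} (hs : 0 < s) :
    ∫ t in Ioi (0:ℝ), (1 - Real.exp (-(t*s))) * t ^ (-1-α)
      = s ^ α * ∫ u in Ioi (0:ℝ), (1 - Real.exp (-u)) * u ^ (-1-α) := by
  have h1 : ∀ t ∈ Ioi (0:ℝ), (1 - Real.exp (-(t*s))) * t ^ (-1-α)
      = s ^ (1+α) • ((fun u : ℝ => (1 - Real.exp (-u)) * u ^ (-1-α)) (t * s)) := by
    intro t ht
    have ht0 : (0:ℝ) < t := ht
    simp only [smul_eq_mul]
    rw [Real.mul_rpow ht0.le hs.le]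
    rw [show s ^ (1+α) * ((1 - Real.exp (-(t*s))) * (t ^ (-1-α) * s ^ (-1-α)))
        = (s ^ (1+α) * s ^ (-1-α)) * ((1 - Real.exp (-(t*s))) * t ^ (-1-α)) from by ring]
    rw [← Real.rpow_add hs]
    norm_num
  rw [MeasureTheory.setIntegral_congr_fun measurableSet_Ioi h1, MeasureTheory.integral_smul,
    MeasureTheory.integral_comp_mul_right_Ioi (fun u : ℝ => (1 - Real.exp (-u)) * u ^ (-1-α)) 0 hs]
  simp only [zero_mul, smul_eq_mul]
  rw [← mul_assoc, ← Real.rpow_neg_one s, ← Real.rpow_add hs]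
  ring_nf

lemma C_pos {α : ℝ} (h0 : 0 < α) (h1 : α < 1) :
    0 < ∫ u in Ioi (0:ℝ), (1 - Real.exp (-u)) * u ^ (-1-α) := by
  have hint : IntegrableOn (fun u : ℝ => (1 - Real.exp (-u)) * u ^ (-1-α)) (Ioi 0) := by
    have := integrableOn_aux h0 h1 (s := 1) zero_le_one
    simpa using this
  have hnn : 0 ≤ᵐ[volume.restrict (Ioi (0:ℝ))] fun u : ℝ => (1 - Real.exp (-u)) * u ^ (-1-α) := by
    filter_upwards [ae_restrict_mem measurableSet_Ioi] with u hu
    have hu0 : (0:ℝ) < u := hu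
    have : Real.exp (-u) ≤ 1 := Real.exp_le_one_iff.mpr (by linarith)
    exact mul_nonneg (by linarith) (Real.rpow_nonneg hu0.le _)
  rw [MeasureTheory.setIntegral_pos_iff_support_of_nonneg_ae hnn hint]
  have hsupp : Ioi (0:ℝ) ⊆ Function.support (fun u : ℝ => (1 - Real.exp (-u)) * u ^ (-1-α)) := by
    intro u hu
    have hu0 : (0:ℝ) < u := hu
    have he : Real.exp (-u) < 1 := by
      rw [Real.exp_lt_one_iff]; linarith
    exact ne_of_gt (mul_pos (by linarith) (Real.rpow_pos_of_pos hu0 _))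
  have : (Function.support (fun u : ℝ => (1 - Real.exp (-u)) * u ^ (-1-α)) ∩ Ioi 0) = Ioi 0 := by
    apply Set.inter_eq_self_of_subset_right hsupp
  rw [this]
  simp [Real.volume_Ioi]




lemma tendsto_log_aux {s : ℝ} (hs : 0 ≤ s) :
    Tendsto (fun m : ℕ => (m:ℝ) * ((1+s) ^ ((m:ℝ)⁻¹) - 1)) atTop
      (nhds (Real.log (1+s))) := by
  rcases eq_or_lt_of_le hs with h | h
  · rw [← h]
    simp only [add_zero, Real.one_rpow, sub_self, mul_zero, Real.log_one]
    exact tendsto_const_nhds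
  · have h1s : (1:ℝ) < 1 + s := by linarith
    set L := Real.log (1+s) with hL
    have hLpos : 0 < L := Real.log_pos h1s
    have hrw : ∀ m : ℕ, (1+s) ^ ((m:ℝ)⁻¹) = Real.exp (L * (m:ℝ)⁻¹) := fun m => by
      rw [Real.rpow_def_of_pos (by linarith : (0:ℝ) < 1 + s), hL]
    have hslope : Tendsto (fun z : ℝ => (Real.exp z - 1) / z)
        (nhdsWithin 0 {(0:ℝ)}ᶜ) (nhds 1) := by
      have h := hasDerivAt_iff_tendsto_slope.mp (Real.hasDerivAt_exp 0)
      rw [Real.exp_zero] at h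
      refine h.congr fun z => ?_
      rw [slope_def_field, Real.exp_zero]
      ring_nf
    have hz : Tendsto (fun m : ℕ => L * (m:ℝ)⁻¹) atTop (nhdsWithin 0 {(0:ℝ)}ᶜ) := by
      apply tendsto_nhdsWithin_of_tendsto_nhds_of_eventually_within
      · have h2 : Tendsto (fun m : ℕ => ((m:ℝ))⁻¹) atTop (nhds 0) :=
          tendsto_inv_atTop_nhds_zero_nat
        have := h2.const_mul L
        simpa using this
      · filter_upwards [eventually_ge_atTop 1] with m hm
        have : (0:ℝ) < (m:ℝ)⁻¹ := by
          have : (0:ℝ) < (m:ℝ) := by exact_mod_cast Nat.pos_of_ne_zero (by omega)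
          positivity
        simp only [Set.mem_compl_iff, Set.mem_singleton_iff]
        positivity
    have hcomp : Tendsto (fun m : ℕ => L * ((Real.exp (L * (m:ℝ)⁻¹) - 1) / (L * (m:ℝ)⁻¹)))
        atTop (nhds (L * 1)) := (hslope.comp hz).const_mul L
    rw [mul_one] at hcomp
    refine hcomp.congr' ?_
    filter_upwards [eventually_ge_atTop 1] with m hm
    have hm0 : (0:ℝ) < (m:ℝ) := by exact_mod_cast Nat.pos_of_ne_zero (by omega)
    rw [hrw m]
    field_simp



lemma mul_sum_sum {n : ℕ} (r : ℝ) (f : Fin n → Fin n → ℝ) :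
    r * ∑ i, ∑ j, f i j = ∑ i, ∑ j, r * f i j := by
  rw [Finset.mul_sum]
  exact Finset.sum_congr rfl fun i _ => Finset.mul_sum _ _ _

lemma sum_sum_sub {n : ℕ} (f g : Fin n → Fin n → ℝ) :
    ∑ i, ∑ j, (f i j - g i j) = (∑ i, ∑ j, f i j) - ∑ i, ∑ j, g i j := by
  rw [← Finset.sum_sub_distrib]
  exact Finset.sum_congr rfl fun i _ => Finset.sum_sub_distrib _ _

lemma sum_sum_one {n : ℕ} {c : Fin n → ℝ} (hc : ∑ i, c i = 0) :
    ∑ i, ∑ j, c i * c j * (1:ℝ) = 0 := by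
  have h : (∑ i, c i) * (∑ j, c j) = ∑ i, ∑ j, c i * c j := Finset.sum_mul_sum _ _ _ _
  rw [hc, zero_mul] at h
  simp only [mul_one]
  exact h.symm

lemma negdef_rpow {X : Type*} [Nonempty X] (ψ : X → X → ℝ) (hψ : IsNegDefKernel ψ)
    (hnonneg : ∀ x y, 0 ≤ ψ x y) {α : ℝ} (h0 : 0 < α) (h1 : α < 1) :
    IsNegDefKernel (fun x y => (ψ x y) ^ α) := by
  obtain ⟨x₀⟩ := (inferInstance : Nonempty X)
  refine ⟨fun x y => by show ψ x y ^ α = ψ y x ^ α; rw [hψ.1 x y], fun n x c hc => ?_⟩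
  set C := ∫ u in Ioi (0:ℝ), (1 - Real.exp (-u)) * u ^ (-1-α) with hCdef
  have hC := C_pos h0 h1
  rw [← hCdef] at hC
  have key : ∀ a b : X, (ψ a b) ^ α
      = C⁻¹ * ∫ t in Ioi (0:ℝ), (1 - Real.exp (-(t * ψ a b))) * t ^ (-1-α) := by
    intro a b
    rcases eq_or_lt_of_le (hnonneg a b) with h | h
    · rw [← h]
      rw [Real.zero_rpow (ne_of_gt h0)]
      simp
    · rw [integral_scal h, ← hCdef]
      field_simp
  have hInt : ∀ i j : Fin n, Integrable
      (fun t : ℝ => c i * c j * ((1 - Real.exp (-(t * ψ (x i) (x j)))) * t ^ (-1-α)))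
      (volume.restrict (Ioi 0)) :=
    fun i j => (integrableOn_aux h0 h1 (hnonneg (x i) (x j))).const_mul _
  have step1 : ∑ i, ∑ j, c i * c j * ψ (x i) (x j) ^ α
      = C⁻¹ * ∑ i, ∑ j, ∫ t in Ioi (0:ℝ),
          c i * c j * ((1 - Real.exp (-(t * ψ (x i) (x j)))) * t ^ (-1-α)) := by
    rw [Finset.mul_sum]
    refine Finset.sum_congr rfl fun i _ => ?_
    rw [Finset.mul_sum]
    refine Finset.sum_congr rfl fun j _ => ?_
    rw [key (x i) (x j), MeasureTheory.integral_const_mul]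
    ring
  have step2 : ∑ i, ∑ j, (∫ t in Ioi (0:ℝ),
        c i * c j * ((1 - Real.exp (-(t * ψ (x i) (x j)))) * t ^ (-1-α)))
      = ∫ t in Ioi (0:ℝ), ∑ i, ∑ j,
          c i * c j * ((1 - Real.exp (-(t * ψ (x i) (x j)))) * t ^ (-1-α)) := by
    rw [MeasureTheory.integral_finset_sum _ (fun i _ => integrable_finset_sum _ (fun j _ => hInt i j))]
    refine Finset.sum_congr rfl fun i _ => ?_
    rw [MeasureTheory.integral_finset_sum _ (fun j _ => hInt i j)]
  have step3 : (∫ t in Ioi (0:ℝ), ∑ i, ∑ j,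
      c i * c j * ((1 - Real.exp (-(t * ψ (x i) (x j)))) * t ^ (-1-α))) ≤ 0 := by
    refine MeasureTheory.setIntegral_nonpos measurableSet_Ioi fun t ht => ?_
    have ht0 : (0:ℝ) < t := ht
    have e : ∀ i j, c i * c j * ((1 - Real.exp (-(t * ψ (x i) (x j)))) * t ^ (-1-α))
        = t ^ (-1-α) * (c i * c j * 1)
          - t ^ (-1-α) * (c i * c j * Real.exp (-(t * ψ (x i) (x j)))) := by
      intro i j; ring
    simp only [e]
    rw [sum_sum_sub, ← mul_sum_sum, ← mul_sum_sum, sum_sum_one hc, mul_zero]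
    have hpos := schoenberg hψ x₀ ht0.le x c
    have hmul := mul_nonneg (Real.rpow_nonneg ht0.le (-1-α)) hpos
    linarith
  rw [step1, step2]
  exact mul_nonpos_of_nonneg_of_nonpos (inv_nonneg.mpr hC.le) step3


lemma negdef_log {X : Type*} [Nonempty X] (ψ : X → X → ℝ) (hψ : IsNegDefKernel ψ)
    (hnonneg : ∀ x y, 0 ≤ ψ x y) :
    IsNegDefKernel (fun x y => Real.log (1 + ψ x y)) := by
  have hψ' : IsNegDefKernel (fun x y => 1 + ψ x y) := by
    refine ⟨fun x y => by show 1 + ψ x y = 1 + ψ y x; rw [hψ.1 x y], fun n x c hc => ?_⟩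
    have e : ∀ i j : Fin n, c i * c j * ((fun x y => 1 + ψ x y) (x i) (x j))
        = c i * c j * 1 + c i * c j * ψ (x i) (x j) := fun i j => by ring
    simp only [e]
    have hsplit : ∑ i, ∑ j, (c i * c j * 1 + c i * c j * ψ (x i) (x j))
        = (∑ i, ∑ j, c i * c j * (1:ℝ)) + ∑ i, ∑ j, c i * c j * ψ (x i) (x j) := by
      rw [← Finset.sum_add_distrib]
      exact Finset.sum_congr rfl fun i _ => Finset.sum_add_distrib
    rw [hsplit, sum_sum_one hc, zero_add]
    exact hψ.2 n x c hc
  have hnonneg' : ∀ x y, 0 ≤ 1 + ψ x y := fun x y => by have := hnonneg x y; linarith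
  refine ⟨fun x y => by show Real.log (1 + ψ x y) = Real.log (1 + ψ y x); rw [hψ.1 x y],
    fun n x c hc => ?_⟩
  have hm : ∀ m : ℕ, 2 ≤ m →
      ∑ i, ∑ j, c i * c j * ((m:ℝ) * ((1 + ψ (x i) (x j)) ^ ((m:ℝ)⁻¹) - 1)) ≤ 0 := by
    intro m hm2
    have hm0 : (0:ℝ) < (m:ℝ) := by exact_mod_cast Nat.pos_of_ne_zero (by omega)
    have hm1 : (1:ℝ) < (m:ℝ) := by exact_mod_cast (by omega : 1 < m)
    have hα0 : 0 < ((m:ℝ))⁻¹ := by positivity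
    have hα1 : ((m:ℝ))⁻¹ < 1 := inv_lt_one_of_one_lt₀ hm1
    have hpow := (negdef_rpow (fun x y => 1 + ψ x y) hψ' hnonneg' hα0 hα1).2 n x c hc
    simp only at hpow
    have e : ∀ i j : Fin n, c i * c j * ((m:ℝ) * ((1 + ψ (x i) (x j)) ^ ((m:ℝ)⁻¹) - 1))
        = (m:ℝ) * (c i * c j * (1 + ψ (x i) (x j)) ^ ((m:ℝ)⁻¹))
          - (m:ℝ) * (c i * c j * 1) := fun i j => by ring
    simp only [e]
    rw [sum_sum_sub, ← mul_sum_sum, ← mul_sum_sum, sum_sum_one hc, mul_zero]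
    have : (m:ℝ) * (∑ i, ∑ j, c i * c j * (1 + ψ (x i) (x j)) ^ ((m:ℝ)⁻¹)) ≤ 0 :=
      mul_nonpos_of_nonneg_of_nonpos hm0.le hpow
    linarith
  have hT : Tendsto (fun m : ℕ =>
        ∑ i, ∑ j, c i * c j * ((m:ℝ) * ((1 + ψ (x i) (x j)) ^ ((m:ℝ)⁻¹) - 1)))
      atTop (nhds (∑ i, ∑ j, c i * c j * Real.log (1 + ψ (x i) (x j)))) := by
    refine tendsto_finset_sum _ fun i _ => tendsto_finset_sum _ fun j _ => ?_
    exact (tendsto_log_aux (hnonneg (x i) (x j))).const_mul _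
  exact le_of_tendsto hT (by filter_upwards [eventually_ge_atTop 2] with m hm2 using hm m hm2)

end NegDefAux

theorem negdef_rpow_and_log_one_add
    {X : Type*} [Nonempty X] (ψ : X → X → ℝ) (hψ : IsNegDefKernel ψ)
    (hnonneg : ∀ x y, 0 ≤ ψ x y) :
    (∀ α : ℝ, 0 < α → α < 1 → IsNegDefKernel (fun x y => (ψ x y) ^ α)) ∧
    IsNegDefKernel (fun x y => Real.log (1 + ψ x y)) :=
  ⟨fun _ h0 h1 => NegDefAux.negdef_rpow ψ hψ hnonneg h0 h1,
   NegDefAux.negdef_log ψ hψ hnonneg⟩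
end

section
/- On the unit sphere S^{d−1} = {x ∈ ℝ^d : ‖x‖ = 1}, the geodesic distance ψ(x,y) = arccos(⟨x,y⟩) is a negative definite kernel on the whole sphere; consequently, for every t > 0, the kernel k(x,y) = exp(−arccos(⟨x,y⟩)/t) is positive definite on S^{d−1}. -/
open scoped RealInnerProductSpace

section AuxForArccosKernel

open scoped Topology

noncomputable def cb (n : ℕ) : ℝ := (Nat.centralBinom n : ℝ) / 4 ^ n

lemma cb_nonneg (n : ℕ) : 0 ≤ cb n := by unfold cb; positivity

lemma cb_le_one (n : ℕ) : cb n ≤ 1 := by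
  rw [cb, div_le_one (by positivity)]
  have h1 : Nat.centralBinom n ≤ (2 * n + 1).choose n :=
    Nat.choose_le_choose n (Nat.le_succ (2 * n))
  have h2 := Nat.choose_middle_le_pow n
  exact_mod_cast h1.trans h2

lemma cb_zero : cb 0 = 1 := by simp [cb, Nat.centralBinom]

lemma cb_rec (n : ℕ) : (2 * (n : ℝ) + 2) * cb (n + 1) = (2 * n + 1) * cb n := by
  have h : ((n : ℝ) + 1) * (Nat.centralBinom (n + 1) : ℝ)
      = 2 * (2 * n + 1) * (Nat.centralBinom n : ℝ) := by
    exact_mod_cast Nat.succ_mul_centralBinom_succ n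
  rw [cb, cb, pow_succ]
  have h4 : (4 : ℝ) ^ n ≠ 0 := by positivity
  field_simp
  linear_combination 2 * h

lemma summable_lin_geo {r : ℝ} (hr : |r| < 1) :
    Summable (fun n : ℕ => (2 * (n : ℝ) + 1) * r ^ n) := by
  have hr' : ‖r‖ < 1 := by rwa [Real.norm_eq_abs]
  have h1 := summable_pow_mul_geometric_of_norm_lt_one 1 hr'
  have h2 := summable_geometric_of_norm_lt_one hr'
  refine ((h1.mul_left 2).add h2).congr fun n => ?_
  ring

lemma summable_main {y : ℝ} (hy : |y| < 1) {c : ℕ → ℝ}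
    (hc : ∀ n, |c n| ≤ 2 * n + 1) : Summable fun n => c n * y ^ (2 * n + 1) := by
  have hy2 : |y ^ 2| < 1 := by
    rw [abs_pow]; exact pow_lt_one₀ (abs_nonneg y) hy (by norm_num)
  refine Summable.of_norm_bounded (((summable_lin_geo hy2).mul_left |y|)) fun n => ?_
  rw [Real.norm_eq_abs, abs_mul, abs_pow]
  have h1 : |y| ^ (2 * n + 1) = |y| * (y ^ 2) ^ n := by
    rw [← sq_abs, ← pow_mul, pow_succ, mul_comm]
  rw [h1]
  have := hc n
  have h2 : (0:ℝ) ≤ (y ^ 2) ^ n := by positivity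
  nlinarith [abs_nonneg (c n), abs_nonneg y, mul_le_mul_of_nonneg_right this h2]

noncomputable def gfun (u : ℝ) : ℝ := ∑' n : ℕ, cb n * u ^ (2 * n)
noncomputable def Sfun (u : ℝ) : ℝ := ∑' n : ℕ, cb n / (2 * n + 1) * u ^ (2 * n + 1)
noncomputable def gderiv (u : ℝ) : ℝ := ∑' n : ℕ, cb n * (2 * n) * u ^ (2 * n - 1)

lemma two_n_cast (n : ℕ) : ((2 * n + 1 : ℕ) : ℝ) = 2 * (n : ℝ) + 1 := by push_cast; ring

lemma summable_gfun {y : ℝ} (hy : |y| < 1) : Summable fun n : ℕ => cb n * y ^ (2 * n) := by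
  have hy2 : |y ^ 2| < 1 := by
    rw [abs_pow]; exact pow_lt_one₀ (abs_nonneg y) hy (by norm_num)
  refine Summable.of_norm_bounded (summable_geometric_of_norm_lt_one
    (by rwa [Real.norm_eq_abs] : ‖y ^ 2‖ < 1)).abs fun n => ?_
  rw [Real.norm_eq_abs, abs_mul]
  have h1 : |y ^ (2 * n)| = |(y ^ 2) ^ n| := by rw [← pow_mul]
  rw [h1]
  have h0 := cb_nonneg n
  have h2 : |cb n| ≤ 1 := by rw [abs_of_nonneg h0]; exact cb_le_one n
  calc |cb n| * |(y ^ 2) ^ n| ≤ 1 * |(y ^ 2) ^ n| :=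
        mul_le_mul_of_nonneg_right h2 (abs_nonneg _)
    _ = |(y ^ 2) ^ n| := one_mul _

lemma hasDerivAt_Sfun {y : ℝ} (hy : |y| < 1) : HasDerivAt Sfun (gfun y) y := by
  set R : ℝ := (|y| + 1) / 2 with hR
  have hab : 0 ≤ |y| := abs_nonneg y
  have hR0 : 0 < R := by rw [hR]; linarith
  have hyR : |y| < R := by rw [hR]; linarith
  have hR1 : R < 1 := by rw [hR]; linarith
  have hmem : y ∈ Metric.ball (0 : ℝ) R := by
    rwa [mem_ball_zero_iff, Real.norm_eq_abs]
  have h0mem : (0 : ℝ) ∈ Metric.ball (0 : ℝ) R := by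
    rw [mem_ball_zero_iff, norm_zero]; exact hR0
  have hu : Summable (fun n : ℕ => (R ^ 2) ^ n) :=
    summable_geometric_of_lt_one (by positivity) (by nlinarith)
  have hg : ∀ (n : ℕ) (z : ℝ), z ∈ Metric.ball (0 : ℝ) R →
      HasDerivAt (fun w : ℝ => cb n / (2 * n + 1) * w ^ (2 * n + 1)) (cb n * z ^ (2 * n)) z := by
    intro n z _
    have h := (hasDerivAt_pow (2 * n + 1) z).const_mul (cb n / (2 * (n : ℝ) + 1))
    refine h.congr_deriv ?_
    have h21 : (2 * (n : ℝ) + 1) ≠ 0 := by positivity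
    simp only [Nat.add_sub_cancel]
    push_cast
    field_simp
  have hbound : ∀ (n : ℕ) (z : ℝ), z ∈ Metric.ball (0 : ℝ) R →
      ‖cb n * z ^ (2 * n)‖ ≤ (R ^ 2) ^ n := by
    intro n z hz
    rw [mem_ball_zero_iff, Real.norm_eq_abs] at hz
    rw [Real.norm_eq_abs, abs_mul, abs_of_nonneg (cb_nonneg n), ← pow_mul, abs_pow]
    calc cb n * |z| ^ (2 * n) ≤ 1 * |z| ^ (2 * n) :=
          mul_le_mul_of_nonneg_right (cb_le_one n) (by positivity)
      _ = |z| ^ (2 * n) := one_mul _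
      _ ≤ R ^ (2 * n) := pow_le_pow_left₀ (abs_nonneg z) hz.le _
  have hg0 : Summable fun n : ℕ => cb n / (2 * (n : ℝ) + 1) * (0 : ℝ) ^ (2 * n + 1) := by
    refine summable_zero.congr fun n => ?_
    rw [zero_pow (by omega : 2 * n + 1 ≠ 0), mul_zero]
  exact hasDerivAt_tsum_of_isPreconnected hu Metric.isOpen_ball
    (convex_ball _ _).isPreconnected hg hbound h0mem hg0 hmem

lemma hasDerivAt_gfun {y : ℝ} (hy : |y| < 1) : HasDerivAt gfun (gderiv y) y := by
  set R : ℝ := (|y| + 1) / 2 with hR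
  have hab : 0 ≤ |y| := abs_nonneg y
  have hR0 : 0 < R := by rw [hR]; linarith
  have hyR : |y| < R := by rw [hR]; linarith
  have hR1 : R < 1 := by rw [hR]; linarith
  have hmem : y ∈ Metric.ball (0 : ℝ) R := by
    rwa [mem_ball_zero_iff, Real.norm_eq_abs]
  have h0mem : (0 : ℝ) ∈ Metric.ball (0 : ℝ) R := by
    rw [mem_ball_zero_iff, norm_zero]; exact hR0
  have hu : Summable (fun n : ℕ => 2 * ((n : ℝ) * R ^ n)) := by
    have h := summable_pow_mul_geometric_of_norm_lt_one 1
      (by rw [Real.norm_eq_abs, abs_of_pos hR0]; exact hR1 : ‖R‖ < 1)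
    refine (h.mul_left 2).congr fun n => ?_
    simp [pow_one]
  have hg : ∀ (n : ℕ) (z : ℝ), z ∈ Metric.ball (0 : ℝ) R →
      HasDerivAt (fun w : ℝ => cb n * w ^ (2 * n)) (cb n * (2 * n) * z ^ (2 * n - 1)) z := by
    intro n z _
    have h := (hasDerivAt_pow (2 * n) z).const_mul (cb n)
    refine h.congr_deriv ?_
    push_cast
    ring
  have hbound : ∀ (n : ℕ) (z : ℝ), z ∈ Metric.ball (0 : ℝ) R →
      ‖cb n * (2 * n) * z ^ (2 * n - 1)‖ ≤ 2 * ((n : ℝ) * R ^ n) := by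
    intro n z hz
    rw [mem_ball_zero_iff, Real.norm_eq_abs] at hz
    rcases Nat.eq_zero_or_pos n with hn | hn
    · subst hn; simp
    · rw [Real.norm_eq_abs, abs_mul, abs_mul, abs_of_nonneg (cb_nonneg n), abs_pow]
      have h1 : |z| ^ (2 * n - 1) ≤ R ^ (2 * n - 1) :=
        pow_le_pow_left₀ (abs_nonneg z) hz.le _
      have h2 : R ^ (2 * n - 1) ≤ R ^ n :=
        pow_le_pow_of_le_one hR0.le hR1.le (by omega)
      have h3 : |2 * (n : ℝ)| = 2 * (n : ℝ) := by
        rw [abs_of_nonneg (by positivity)]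
      calc cb n * |2 * (n : ℝ)| * |z| ^ (2 * n - 1)
          ≤ 1 * (2 * (n : ℝ)) * R ^ n := by
            rw [h3]
            have hzn : (0:ℝ) ≤ |z| ^ (2*n-1) := by positivity
            exact mul_le_mul (mul_le_mul_of_nonneg_right (cb_le_one n) (by positivity))
              (h1.trans h2) hzn (by positivity)
        _ = 2 * ((n : ℝ) * R ^ n) := by ring
  have hg0 : Summable fun n : ℕ => cb n * (0 : ℝ) ^ (2 * n) := by
    refine summable_of_ne_finset_zero (s := {0}) fun n hn => ?_
    have : n ≠ 0 := by simpa using hn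
    rw [zero_pow (by omega : 2 * n ≠ 0), mul_zero]
  exact hasDerivAt_tsum_of_isPreconnected hu Metric.isOpen_ball
    (convex_ball _ _).isPreconnected hg hbound h0mem hg0 hmem

lemma summable_gderiv {y : ℝ} (hy : |y| < 1) :
    Summable fun n : ℕ => cb n * (2 * (n : ℝ)) * y ^ (2 * n - 1) := by
  have hy' : ‖y‖ < 1 := by rwa [Real.norm_eq_abs]
  refine Summable.of_norm_bounded ((summable_lin_geo hy).abs) fun n => ?_
  rw [Real.norm_eq_abs, abs_mul, abs_mul, abs_of_nonneg (cb_nonneg n),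
    abs_of_nonneg (by positivity : (0:ℝ) ≤ 2 * (n:ℝ)), abs_pow]
  rcases Nat.eq_zero_or_pos n with hn | hn
  · subst hn; simp
  · have h1 : |y| ^ (2 * n - 1) ≤ |y| ^ n :=
      pow_le_pow_of_le_one (abs_nonneg y) hy.le (by omega)
    have h2 : |(2 * (n:ℝ) + 1) * y ^ n| = (2 * (n:ℝ) + 1) * |y| ^ n := by
      rw [abs_mul, abs_of_nonneg (by positivity : (0:ℝ) ≤ 2*(n:ℝ)+1), abs_pow]
    rw [h2]
    have hzn : (0:ℝ) ≤ |y| ^ (2 * n - 1) := by positivity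
    exact mul_le_mul (by nlinarith [cb_le_one n, cb_nonneg n]) h1 hzn (by positivity)

lemma summable_S1 {y : ℝ} (hy : |y| < 1) :
    Summable fun n : ℕ => (2 * (n:ℝ) + 1) * cb n * y ^ (2 * n + 1) := by
  refine summable_main hy fun n => ?_
  rw [abs_mul, abs_of_nonneg (by positivity : (0:ℝ) ≤ 2*(n:ℝ)+1),
    abs_of_nonneg (cb_nonneg n)]
  nlinarith [cb_le_one n, cb_nonneg n]

lemma summable_S2 {y : ℝ} (hy : |y| < 1) :
    Summable fun n : ℕ => 2 * (n:ℝ) * cb n * y ^ (2 * n + 1) := by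
  refine summable_main hy fun n => ?_
  rw [abs_mul, abs_of_nonneg (by positivity : (0:ℝ) ≤ 2*(n:ℝ)),
    abs_of_nonneg (cb_nonneg n)]
  nlinarith [cb_le_one n, cb_nonneg n]

lemma summable_S3 {y : ℝ} (hy : |y| < 1) :
    Summable fun n : ℕ => cb n * y ^ (2 * n + 1) := by
  refine summable_main hy fun n => ?_
  rw [abs_of_nonneg (cb_nonneg n)]
  have := cb_le_one n
  have : (0:ℝ) ≤ (n:ℝ) := by positivity
  linarith [cb_le_one n]

lemma gderiv_eq {y : ℝ} (hy : |y| < 1) :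
    gderiv y = ∑' n : ℕ, (2 * (n:ℝ) + 1) * cb n * y ^ (2 * n + 1) := by
  rw [gderiv, Summable.tsum_eq_zero_add]
  · simp only [Nat.cast_zero, mul_zero, zero_mul, Nat.zero_eq, pow_zero, zero_add]
    refine tsum_congr fun n => ?_
    have hrec := cb_rec n
    have he : 2 * (n + 1) - 1 = 2 * n + 1 := by omega
    push_cast
    rw [he]
    linear_combination y ^ (2 * n + 1) * hrec
  · exact summable_gderiv hy

lemma ode {y : ℝ} (hy : |y| < 1) : (1 - y ^ 2) * gderiv y = y * gfun y := by
  have h2 : y ^ 2 * gderiv y = ∑' n : ℕ, 2 * (n:ℝ) * cb n * y ^ (2 * n + 1) := by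
    rw [gderiv, ← tsum_mul_left]
    refine tsum_congr fun n => ?_
    rcases Nat.eq_zero_or_pos n with hn | hn
    · subst hn; simp
    · have he : 2 * n - 1 + 2 = 2 * n + 1 := by omega
      calc y ^ 2 * (cb n * (2 * (n:ℝ)) * y ^ (2 * n - 1))
          = 2 * (n:ℝ) * cb n * y ^ (2 * n - 1 + 2) := by rw [pow_add]; ring
        _ = 2 * (n:ℝ) * cb n * y ^ (2 * n + 1) := by rw [he]
  have h3 : y * gfun y = ∑' n : ℕ, cb n * y ^ (2 * n + 1) := by
    rw [gfun, ← tsum_mul_left]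
    exact tsum_congr fun n => by rw [pow_succ]; ring
  have h4 : (1 - y ^ 2) * gderiv y = gderiv y - y ^ 2 * gderiv y := by ring
  rw [h4, h2, gderiv_eq hy, h3, ← Summable.tsum_sub (summable_S1 hy) (summable_S2 hy)]
  exact tsum_congr fun n => by ring

lemma const_of_deriv_zero {F : ℝ → ℝ} (hF : ∀ z : ℝ, |z| < 1 → HasDerivAt F 0 z)
    {y : ℝ} (hy : |y| < 1) : F y = F 0 := by
  rcases le_total 0 y with h0 | h0
  · have habs : ∀ z ∈ Set.Icc (0:ℝ) y, |z| < 1 := by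
      intro z hz
      rw [abs_of_nonneg hz.1]
      calc z ≤ y := hz.2
        _ ≤ |y| := le_abs_self y
        _ < 1 := hy
    exact constant_of_has_deriv_right_zero
      (fun z hz => (hF z (habs z hz)).continuousAt.continuousWithinAt)
      (fun z hz => (hF z (habs z (Set.Ico_subset_Icc_self hz))).hasDerivWithinAt)
      y ⟨h0, le_rfl⟩
  · have habs : ∀ z ∈ Set.Icc y (0:ℝ), |z| < 1 := by
      intro z hz
      rw [abs_lt]
      have h1 : -|y| ≤ y := neg_abs_le y
      exact ⟨by linarith [hz.1], by linarith [hz.2]⟩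
    have := constant_of_has_deriv_right_zero
      (fun z hz => (hF z (habs z hz)).continuousAt.continuousWithinAt)
      (fun z hz => (hF z (habs z (Set.Ico_subset_Icc_self hz))).hasDerivWithinAt)
      0 ⟨h0, le_rfl⟩
    exact this.symm

lemma gfun_zero : gfun 0 = 1 := by
  rw [gfun]
  rw [tsum_eq_single 0 (fun n hn => by
    rw [zero_pow (by omega : 2 * n ≠ 0), mul_zero])]
  simp [cb_zero]

lemma Sfun_zero : Sfun 0 = 0 := by
  rw [Sfun]
  convert tsum_zero with n
  rw [zero_pow (by omega : 2 * n + 1 ≠ 0), mul_zero]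

lemma gfun_sq {y : ℝ} (hy : |y| < 1) : (1 - y ^ 2) * (gfun y) ^ 2 = 1 := by
  have hF : ∀ z : ℝ, |z| < 1 →
      HasDerivAt (fun w : ℝ => (1 - w ^ 2) * (gfun w) ^ 2) 0 z := by
    intro z hz
    have hg := hasDerivAt_gfun hz
    have h1 : HasDerivAt (fun w : ℝ => 1 - w ^ 2) (-(2 * z)) z := by
      have := (hasDerivAt_pow 2 z).const_sub 1
      simpa using this
    have h2 : HasDerivAt (fun w : ℝ => (gfun w) ^ 2) (2 * gfun z * gderiv z) z := by
      have := hg.pow 2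
      exact (by simpa using this : HasDerivAt (gfun ^ 2) (2 * gfun z * gderiv z) z)
    have h3 := h1.mul h2
    refine h3.congr_deriv ?_
    have ho := ode hz
    linear_combination (2 * gfun z) * ho
  have h := const_of_deriv_zero hF hy
  simpa [gfun_zero] using h

lemma gfun_pos {y : ℝ} (hy : |y| < 1) : 1 ≤ gfun y := by
  have hs := summable_gfun hy
  have h0 : ∀ n : ℕ, 0 ≤ cb n * y ^ (2 * n) := by
    intro n
    have : y ^ (2 * n) = (y ^ 2) ^ n := by rw [← pow_mul]
    rw [this]
    exact mul_nonneg (cb_nonneg n) (by positivity)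
  have := Summable.le_tsum hs 0 fun n _ => h0 n
  simpa [cb_zero, gfun] using this

lemma gfun_eq {y : ℝ} (hy : |y| < 1) : gfun y = 1 / Real.sqrt (1 - y ^ 2) := by
  have hy' := abs_lt.mp hy
  have h1 : 0 < 1 - y ^ 2 := by nlinarith
  have hsq := gfun_sq hy
  have hgpos : 0 < gfun y := lt_of_lt_of_le one_pos (gfun_pos hy)
  have hspos : 0 < Real.sqrt (1 - y ^ 2) := Real.sqrt_pos.mpr h1
  have h2 : (Real.sqrt (1 - y ^ 2) * gfun y) ^ 2 = 1 := by
    rw [mul_pow, Real.sq_sqrt h1.le, hsq]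
  have h3 : (Real.sqrt (1 - y ^ 2) * gfun y - 1) *
      (Real.sqrt (1 - y ^ 2) * gfun y + 1) = 0 := by linear_combination h2
  rcases mul_eq_zero.mp h3 with h4 | h4
  · have h5 : Real.sqrt (1 - y ^ 2) * gfun y = 1 := by linarith
    field_simp
    linarith [h5]
  · nlinarith [mul_pos hspos hgpos]

lemma arcsin_eq_Sfun {y : ℝ} (hy : |y| < 1) : Real.arcsin y = Sfun y := by
  have hF : ∀ z : ℝ, |z| < 1 →
      HasDerivAt (fun w : ℝ => Real.arcsin w - Sfun w) 0 z := by
    intro z hz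
    have hz' := abs_lt.mp hz
    have ha : HasDerivAt Real.arcsin (1 / Real.sqrt (1 - z ^ 2)) z :=
      Real.hasDerivAt_arcsin (by intro h; rw [h] at hz; norm_num at hz)
        (by intro h; rw [h] at hz; norm_num at hz)
    have hb := hasDerivAt_Sfun hz
    have h3 := ha.sub hb
    have h4 : 1 / Real.sqrt (1 - z ^ 2) - gfun z = 0 := by
      rw [gfun_eq hz]; ring
    rw [h4] at h3
    exact h3
  have h := const_of_deriv_zero hF hy
  rw [Real.arcsin_zero, Sfun_zero, sub_zero] at h
  linarith [h]

lemma quad_pow {n N : ℕ} (w : Fin N → Fin n → ℝ) (c : Fin n → ℝ) (m : ℕ) :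
    0 ≤ ∑ i, ∑ j, c i * c j * (∑ k, w k i * w k j) ^ m := by
  have key : ∀ i j : Fin n, (∑ k, w k i * w k j) ^ m
      = ∑ p : Fin m → Fin N, (∏ l, w (p l) i) * (∏ l, w (p l) j) := by
    intro i j
    have h1 : (∑ k, w k i * w k j) ^ m = ∏ _l : Fin m, (∑ k, w k i * w k j) := by
      rw [Finset.prod_const, Finset.card_univ, Fintype.card_fin]
    rw [h1, Finset.prod_univ_sum]
    simp only [Fintype.piFinset_univ]
    exact Finset.sum_congr rfl fun p _ => by rw [Finset.prod_mul_distrib]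
  calc ∑ i, ∑ j, c i * c j * (∑ k, w k i * w k j) ^ m
      = ∑ i, ∑ j, ∑ p : Fin m → Fin N,
          (c i * ∏ l, w (p l) i) * (c j * ∏ l, w (p l) j) := by
        refine Finset.sum_congr rfl fun i _ => Finset.sum_congr rfl fun j _ => ?_
        rw [key, Finset.mul_sum]
        exact Finset.sum_congr rfl fun p _ => by ring
    _ = ∑ i, ∑ p : Fin m → Fin N, ∑ j,
          (c i * ∏ l, w (p l) i) * (c j * ∏ l, w (p l) j) :=
        Finset.sum_congr rfl fun i _ => Finset.sum_comm
    _ = ∑ p : Fin m → Fin N, ∑ i, ∑ j,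
          (c i * ∏ l, w (p l) i) * (c j * ∏ l, w (p l) j) := Finset.sum_comm
    _ = ∑ p : Fin m → Fin N, (∑ i, c i * ∏ l, w (p l) i) ^ 2 :=
        Finset.sum_congr rfl fun p _ => by rw [sq, Finset.sum_mul_sum]
    _ ≥ 0 := Finset.sum_nonneg fun p _ => sq_nonneg _

lemma quad_tsum {n : ℕ} (A : Fin n → Fin n → ℝ) (c : Fin n → ℝ) (q : ℕ → ℝ)
    (e : ℕ → ℕ) (hq : ∀ k, 0 ≤ q k)
    (hsum : ∀ i j, Summable fun k => q k * A i j ^ e k)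
    (hA : ∀ m : ℕ, 0 ≤ ∑ i, ∑ j, c i * c j * A i j ^ m) :
    0 ≤ ∑ i, ∑ j, c i * c j * ∑' k, q k * A i j ^ e k := by
  have h1 : ∀ i j : Fin n, c i * c j * ∑' k, q k * A i j ^ e k
      = ∑' k, c i * c j * (q k * A i j ^ e k) := fun i j => (tsum_mul_left).symm
  have hsum2 : ∀ i j : Fin n, Summable fun k => c i * c j * (q k * A i j ^ e k) :=
    fun i j => (hsum i j).mul_left _
  have hrow : ∀ i : Fin n, Summable fun k => ∑ j, c i * c j * (q k * A i j ^ e k) :=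
    fun i => summable_sum fun j _ => hsum2 i j
  have h2 : ∑ i, ∑ j, c i * c j * ∑' k, q k * A i j ^ e k
      = ∑' k, ∑ i, ∑ j, c i * c j * (q k * A i j ^ e k) := by
    simp_rw [h1]
    calc ∑ i, ∑ j, ∑' k, c i * c j * (q k * A i j ^ e k)
        = ∑ i, ∑' k, ∑ j, c i * c j * (q k * A i j ^ e k) :=
          Finset.sum_congr rfl fun i _ => (Summable.tsum_finsetSum fun j _ => hsum2 i j).symm
      _ = ∑' k, ∑ i, ∑ j, c i * c j * (q k * A i j ^ e k) :=
          (Summable.tsum_finsetSum fun i _ => hrow i).symm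
  rw [h2]
  refine tsum_nonneg fun k => ?_
  have h3 : ∑ i, ∑ j, c i * c j * (q k * A i j ^ e k)
      = q k * ∑ i, ∑ j, c i * c j * A i j ^ e k := by
    rw [Finset.mul_sum]
    refine Finset.sum_congr rfl fun i _ => ?_
    rw [Finset.mul_sum]
    exact Finset.sum_congr rfl fun j _ => by ring
  rw [h3]
  exact mul_nonneg (hq k) (hA (e k))

open scoped MatrixOrder in
lemma exists_gram {n : ℕ} (A : Fin n → Fin n → ℝ) (hsymm : ∀ i j, A i j = A j i)
    (h : ∀ c : Fin n → ℝ, 0 ≤ ∑ i, ∑ j, c i * c j * A i j) :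
    ∃ w : Fin n → Fin n → ℝ, ∀ i j, A i j = ∑ k, w k i * w k j := by
  have hM : (Matrix.of A).PosSemidef := by
    rw [Matrix.posSemidef_iff_dotProduct_mulVec]
    constructor
    · ext i j
      simp only [Matrix.conjTranspose_apply, Matrix.of_apply, star_trivial]
      exact hsymm j i
    · intro x
      have := h x
      simp only [dotProduct, Matrix.mulVec, Matrix.of_apply, star_trivial,
        Pi.star_apply, dotProduct]
      calc (0:ℝ) ≤ ∑ i, ∑ j, x i * x j * A i j := h x
        _ = ∑ i, x i * ∑ j, A i j * x j := by
            refine Finset.sum_congr rfl fun i _ => ?_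
            rw [Finset.mul_sum]
            exact Finset.sum_congr rfl fun j _ => by ring
  set S := CFC.sqrt (Matrix.of A) with hS
  have hS2 : S * S = Matrix.of A := CFC.sqrt_mul_sqrt_self _ hM.nonneg
  have hSh : S.IsHermitian := (Matrix.nonneg_iff_posSemidef.mp (CFC.sqrt_nonneg (Matrix.of A))).1
  refine ⟨fun k i => S k i, fun i j => ?_⟩
  have h1 : A i j = (S * S) i j := by rw [hS2]; rfl
  rw [h1, Matrix.mul_apply]
  refine Finset.sum_congr rfl fun k _ => ?_
  have h2 : S i k = S k i := by
    conv_lhs => rw [← hSh]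
    simp [Matrix.conjTranspose_apply]
  rw [h2]

lemma arcsin_quad {n N : ℕ} (A : Fin n → Fin n → ℝ) (w : Fin N → Fin n → ℝ)
    (hw : ∀ i j, A i j = ∑ k, w k i * w k j) (hA1 : ∀ i j, |A i j| ≤ 1)
    (c : Fin n → ℝ) : 0 ≤ ∑ i, ∑ j, c i * c j * Real.arcsin (A i j) := by
  have hpow : ∀ m : ℕ, 0 ≤ ∑ i, ∑ j, c i * c j * A i j ^ m := by
    intro m
    simp_rw [hw]
    exact quad_pow w c m
  have hQ : ∀ r : ℝ, r ∈ Set.Ioo (0:ℝ) 1 →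
      0 ≤ ∑ i, ∑ j, c i * c j * Real.arcsin (r * A i j) := by
    intro r hr
    obtain ⟨hr0, hr1⟩ := hr
    have heq : ∀ i j : Fin n, Real.arcsin (r * A i j)
        = ∑' k : ℕ, (cb k / (2 * (k:ℝ) + 1) * r ^ (2 * k + 1)) * A i j ^ (2 * k + 1) := by
      intro i j
      have habs : |r * A i j| < 1 := by
        rw [abs_mul, abs_of_pos hr0]
        calc r * |A i j| ≤ r * 1 := mul_le_mul_of_nonneg_left (hA1 i j) hr0.le
          _ < 1 := by linarith
      rw [arcsin_eq_Sfun habs, Sfun]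
      exact tsum_congr fun k => by rw [mul_pow]; ring
    simp_rw [heq]
    refine quad_tsum A c _ (fun k => 2 * k + 1)
      (fun k => mul_nonneg (div_nonneg (cb_nonneg k) (by positivity)) (by positivity))
      (fun i j => ?_) hpow
    refine Summable.of_norm_bounded (g := fun k => r ^ (2 * k + 1)) ?_ fun k => ?_
    · have hs : Summable (fun k : ℕ => r * (r ^ 2) ^ k) :=
        (summable_geometric_of_lt_one (by positivity) (by nlinarith)).mul_left r
      exact hs.congr fun k => by rw [← pow_mul, pow_succ]; ring
    · show ‖cb k / (2 * (k:ℝ) + 1) * r ^ (2 * k + 1) * A i j ^ (2 * k + 1)‖ ≤ r ^ (2 * k + 1)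
      have h1 : |cb k / (2 * (k:ℝ) + 1)| ≤ 1 := by
        rw [abs_of_nonneg (div_nonneg (cb_nonneg k) (by positivity))]
        rw [div_le_one (by positivity)]
        have := cb_le_one k
        have hk : (0:ℝ) ≤ (k:ℝ) := Nat.cast_nonneg k
        linarith
      have h2 : |A i j ^ (2 * k + 1)| ≤ 1 := by
        rw [abs_pow]
        exact pow_le_one₀ (abs_nonneg _) (hA1 i j)
      have h3 : |r ^ (2 * k + 1)| = r ^ (2 * k + 1) := abs_of_nonneg (by positivity)
      rw [Real.norm_eq_abs, abs_mul, abs_mul, h3]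
      have h4 : (0:ℝ) ≤ r ^ (2 * k + 1) := by positivity
      calc |cb k / (2 * (k:ℝ) + 1)| * r ^ (2 * k + 1) * |A i j ^ (2 * k + 1)|
          ≤ 1 * r ^ (2 * k + 1) * 1 :=
            mul_le_mul (mul_le_mul_of_nonneg_right h1 h4) h2 (abs_nonneg _) (by positivity)
        _ = r ^ (2 * k + 1) := by ring
  have hcont : Continuous fun r : ℝ => ∑ i, ∑ j, c i * c j * Real.arcsin (r * A i j) := by
    refine continuous_finset_sum _ fun i _ => continuous_finset_sum _ fun j _ => ?_
    exact continuous_const.mul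
      (Real.continuous_arcsin.comp (continuous_id.mul continuous_const))
  have ht : Filter.Tendsto (fun r : ℝ => ∑ i, ∑ j, c i * c j * Real.arcsin (r * A i j))
      (nhdsWithin 1 (Set.Iio 1))
      (nhds (∑ i, ∑ j, c i * c j * Real.arcsin (1 * A i j))) :=
    (hcont.tendsto 1).mono_left nhdsWithin_le_nhds
  have hmem : Set.Ioo (0:ℝ) 1 ∈ nhdsWithin (1:ℝ) (Set.Iio 1) :=
    Ioo_mem_nhdsLT_of_mem (by constructor <;> norm_num)
  have := ge_of_tendsto ht (Filter.eventually_of_mem hmem hQ)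
  simpa using this

lemma exp_quad {n : ℕ} (B : Fin n → Fin n → ℝ) (hsymm : ∀ i j, B i j = B j i)
    (hpsd : ∀ c : Fin n → ℝ, 0 ≤ ∑ i, ∑ j, c i * c j * B i j)
    (c : Fin n → ℝ) : 0 ≤ ∑ i, ∑ j, c i * c j * Real.exp (B i j) := by
  obtain ⟨w, hw⟩ := exists_gram B hsymm hpsd
  have hexp : ∀ i j : Fin n, Real.exp (B i j)
      = ∑' m : ℕ, (1 / (m.factorial : ℝ)) * B i j ^ m := by
    intro i j
    have h := congrFun (NormedSpace.exp_eq_tsum_div (𝔸 := ℝ)) (B i j)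
    rw [Real.exp_eq_exp_ℝ, h]
    exact tsum_congr fun m => by rw [div_eq_mul_inv, one_div, mul_comm]
  simp_rw [hexp]
  refine quad_tsum B c _ id (fun m => by positivity) (fun i j => ?_)
    (fun m => by simp_rw [hw]; exact quad_pow w c m)
  exact (Real.summable_pow_div_factorial (B i j)).congr fun m => by
    simp only [id]
    rw [div_eq_mul_inv, one_div, mul_comm]

open scoped RealInnerProductSpace

section Main

variable {d : ℕ}

lemma sphere_inner_gram {n : ℕ} (x : Fin n → Metric.sphere (0 : EuclideanSpace ℝ (Fin d)) 1)
    (i j : Fin n) :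
    ⟪(x i : EuclideanSpace ℝ (Fin d)), (x j : EuclideanSpace ℝ (Fin d))⟫
      = ∑ k, (x i : EuclideanSpace ℝ (Fin d)) k * (x j : EuclideanSpace ℝ (Fin d)) k := by
  simp [PiLp.inner_apply, RCLike.inner_apply, conj_trivial]
  exact Finset.sum_congr rfl fun k _ => mul_comm _ _

lemma sphere_inner_abs_le_one {n : ℕ}
    (x : Fin n → Metric.sphere (0 : EuclideanSpace ℝ (Fin d)) 1) (i j : Fin n) :
    |⟪(x i : EuclideanSpace ℝ (Fin d)), (x j : EuclideanSpace ℝ (Fin d))⟫| ≤ 1 := by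
  have h1 : ‖(x i : EuclideanSpace ℝ (Fin d))‖ = 1 :=
    mem_sphere_zero_iff_norm.mp (x i).2
  have h2 : ‖(x j : EuclideanSpace ℝ (Fin d))‖ = 1 :=
    mem_sphere_zero_iff_norm.mp (x j).2
  calc |⟪(x i : EuclideanSpace ℝ (Fin d)), (x j : EuclideanSpace ℝ (Fin d))⟫|
      ≤ ‖(x i : EuclideanSpace ℝ (Fin d))‖ * ‖(x j : EuclideanSpace ℝ (Fin d))‖ :=
        abs_real_inner_le_norm _ _
    _ = 1 := by rw [h1, h2, mul_one]

lemma sphere_arcsin_quad {n : ℕ}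
    (x : Fin n → Metric.sphere (0 : EuclideanSpace ℝ (Fin d)) 1) (c : Fin n → ℝ) :
    0 ≤ ∑ i, ∑ j, c i * c j *
      Real.arcsin ⟪(x i : EuclideanSpace ℝ (Fin d)), (x j : EuclideanSpace ℝ (Fin d))⟫ :=
  arcsin_quad _ (fun k i => (x i : EuclideanSpace ℝ (Fin d)) k)
    (fun i j => sphere_inner_gram x i j) (fun i j => sphere_inner_abs_le_one x i j) c

end Main

end AuxForArccosKernel

theorem arccos_negdef_on_sphere_and_exp_posdef (d : ℕ) :
    IsNegDefKernel (fun x y : Metric.sphere (0 : EuclideanSpace ℝ (Fin d)) 1 =>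
      Real.arccos ⟪(x : EuclideanSpace ℝ (Fin d)), (y : EuclideanSpace ℝ (Fin d))⟫) ∧
    ∀ t : ℝ, 0 < t →
      IsPosDefKernel (fun x y : Metric.sphere (0 : EuclideanSpace ℝ (Fin d)) 1 =>
        Real.exp (-Real.arccos ⟪(x : EuclideanSpace ℝ (Fin d)), (y : EuclideanSpace ℝ (Fin d))⟫ / t)) := by
  constructor
  · refine ⟨fun x y => ?_, fun n x c hc => ?_⟩
    · show Real.arccos ⟪(x : EuclideanSpace ℝ (Fin d)), (y : EuclideanSpace ℝ (Fin d))⟫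
        = Real.arccos ⟪(y : EuclideanSpace ℝ (Fin d)), (x : EuclideanSpace ℝ (Fin d))⟫
      rw [real_inner_comm]
    have harcsin := sphere_arcsin_quad x c
    have hsplit : ∑ i, ∑ j, c i * c j *
        Real.arccos ⟪(x i : EuclideanSpace ℝ (Fin d)), (x j : EuclideanSpace ℝ (Fin d))⟫
        = ∑ i, ∑ j, (c i * c j * (Real.pi / 2) - c i * c j *
            Real.arcsin ⟪(x i : EuclideanSpace ℝ (Fin d)), (x j : EuclideanSpace ℝ (Fin d))⟫) := by
      refine Finset.sum_congr rfl fun i _ => Finset.sum_congr rfl fun j _ => ?_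
      rw [Real.arccos_eq_pi_div_two_sub_arcsin]
      ring
    have hzero : ∀ i : Fin n, ∑ j, c i * c j * (Real.pi / 2) = 0 := by
      intro i
      have h1 : ∑ j, c i * c j * (Real.pi / 2) = c i * (Real.pi / 2) * ∑ j, c j := by
        rw [Finset.mul_sum]
        exact Finset.sum_congr rfl fun j _ => by ring
      rw [h1, hc, mul_zero]
    calc ∑ i, ∑ j, c i * c j *
        Real.arccos ⟪(x i : EuclideanSpace ℝ (Fin d)), (x j : EuclideanSpace ℝ (Fin d))⟫
        = ∑ i, (∑ j, c i * c j * (Real.pi / 2)) - ∑ i, ∑ j, c i * c j *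
            Real.arcsin ⟪(x i : EuclideanSpace ℝ (Fin d)), (x j : EuclideanSpace ℝ (Fin d))⟫ := by
          rw [hsplit]
          have h2 : ∀ i : Fin n, ∑ j, (c i * c j * (Real.pi / 2) - c i * c j *
              Real.arcsin ⟪(x i : EuclideanSpace ℝ (Fin d)), (x j : EuclideanSpace ℝ (Fin d))⟫)
              = ∑ j, c i * c j * (Real.pi / 2) - ∑ j, c i * c j *
              Real.arcsin ⟪(x i : EuclideanSpace ℝ (Fin d)), (x j : EuclideanSpace ℝ (Fin d))⟫ :=
            fun i => Finset.sum_sub_distrib _ _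
          simp_rw [h2]
          rw [Finset.sum_sub_distrib]
      _ ≤ 0 := by
          simp only [hzero, Finset.sum_const_zero]
          linarith
  · intro t ht
    refine ⟨fun x y => ?_, fun n x c => ?_⟩
    · show Real.exp (-Real.arccos ⟪(x : EuclideanSpace ℝ (Fin d)), (y : EuclideanSpace ℝ (Fin d))⟫ / t)
        = Real.exp (-Real.arccos ⟪(y : EuclideanSpace ℝ (Fin d)), (x : EuclideanSpace ℝ (Fin d))⟫ / t)
      rw [real_inner_comm]
    set B : Fin n → Fin n → ℝ := fun i j => (1 / t) *
      Real.arcsin ⟪(x i : EuclideanSpace ℝ (Fin d)), (x j : EuclideanSpace ℝ (Fin d))⟫ with hB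
    have hBsymm : ∀ i j, B i j = B j i := by
      intro i j; rw [hB]; simp only; rw [real_inner_comm]
    have hBpsd : ∀ c' : Fin n → ℝ, 0 ≤ ∑ i, ∑ j, c' i * c' j * B i j := by
      intro c'
      have h1 : ∑ i, ∑ j, c' i * c' j * B i j = (1 / t) * ∑ i, ∑ j, c' i * c' j *
          Real.arcsin ⟪(x i : EuclideanSpace ℝ (Fin d)), (x j : EuclideanSpace ℝ (Fin d))⟫ := by
        rw [Finset.mul_sum]
        refine Finset.sum_congr rfl fun i _ => ?_
        rw [Finset.mul_sum]
        exact Finset.sum_congr rfl fun j _ => by rw [hB]; ring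
      rw [h1]
      exact mul_nonneg (by positivity) (sphere_arcsin_quad x c')
    have hkey : ∀ i j : Fin n,
        Real.exp (-Real.arccos ⟪(x i : EuclideanSpace ℝ (Fin d)),
          (x j : EuclideanSpace ℝ (Fin d))⟫ / t)
        = Real.exp (-(Real.pi / 2) / t) * Real.exp (B i j) := by
      intro i j
      rw [← Real.exp_add]
      congr 1
      rw [Real.arccos_eq_pi_div_two_sub_arcsin, hB]
      field_simp
      ring
    have hfinal : ∑ i, ∑ j, c i * c j *
        Real.exp (-Real.arccos ⟪(x i : EuclideanSpace ℝ (Fin d)),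
          (x j : EuclideanSpace ℝ (Fin d))⟫ / t)
        = Real.exp (-(Real.pi / 2) / t) * ∑ i, ∑ j, c i * c j * Real.exp (B i j) := by
      rw [Finset.mul_sum]
      refine Finset.sum_congr rfl fun i _ => ?_
      rw [Finset.mul_sum]
      refine Finset.sum_congr rfl fun j _ => ?_
      rw [hkey i j]
      ring
    rw [hfinal]
    exact mul_nonneg (Real.exp_pos _).le (exp_quad B hBsymm hBpsd c)
end

section
/- (Representer theorem) Let H be a real Hilbert space, X a nonempty set, Φ : X → H, and x₁,…,xₙ ∈ X. Let Ψ : ℝⁿ × ℝ → ℝ be strictly increasing with respect to its last argument (i.e., for fixed v ∈ ℝⁿ, r < r' implies Ψ(v,r) < Ψ(v,r')). Then any minimizer f ∈ H of the functional f ↦ Ψ(⟨f, Φ(x₁)⟩, …, ⟨f, Φ(xₙ)⟩, ‖f‖) over H lies in the finite dimensional subspace span{Φ(x₁), …, Φ(xₙ)} of H. -/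
open scoped RealInnerProductSpace

/-- **Representer theorem.** Any minimizer over a real Hilbert space `H` of a functional
of the evaluations `⟪f, Φ(xᵢ)⟫` which is strictly increasing in `‖f‖` lies in the span of
the feature vectors `Φ(x₁), …, Φ(xₙ)`. -/
theorem representer_theorem
    {H : Type*} [NormedAddCommGroup H] [InnerProductSpace ℝ H] [CompleteSpace H]
    {X : Type*} [Nonempty X] (Φ : X → H) (n : ℕ) (x : Fin n → X)
    (Ψ : (Fin n → ℝ) → ℝ → ℝ)
    (hΨ : ∀ (v : Fin n → ℝ) (r r' : ℝ), r < r' → Ψ v r < Ψ v r')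
    (f : H)
    (hf : ∀ g : H, Ψ (fun i => ⟪f, Φ (x i)⟫) ‖f‖ ≤ Ψ (fun i => ⟪g, Φ (x i)⟫) ‖g‖) :
    f ∈ Submodule.span ℝ (Set.range fun i => Φ (x i)) := by
  set V : Submodule ℝ H := Submodule.span ℝ (Set.range fun i => Φ (x i)) with hV
  haveI : FiniteDimensional ℝ V := by
    apply FiniteDimensional.span_of_finite
    exact Set.finite_range _
  set g : H := (Submodule.orthogonalProjectionOnto V f : H) with hg
  have hgV : g ∈ V := (Submodule.orthogonalProjectionOnto V f).2
  have horth : ∀ u ∈ V, ⟪f - g, u⟫ = 0 := fun u hu =>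
    Submodule.starProjection_inner_eq_zero f u hu
  have hinner : ∀ i, ⟪g, Φ (x i)⟫ = ⟪f, Φ (x i)⟫ := by
    intro i
    have hmem : Φ (x i) ∈ V := Submodule.subset_span ⟨i, rfl⟩
    have := horth (Φ (x i)) hmem
    rw [inner_sub_left] at this
    linarith
  by_contra hfV
  have hne : f - g ≠ 0 := by
    intro h
    apply hfV
    have : f = g := by rwa [sub_eq_zero] at h
    rw [this]; exact hgV
  have hnorm : ‖g‖ < ‖f‖ := by
    have hpyth : ‖f‖ ^ 2 = ‖g‖ ^ 2 + ‖f - g‖ ^ 2 := by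
      have h0 : ⟪g, f - g⟫ = 0 := by
        rw [real_inner_comm]; exact horth g hgV
      have := norm_add_sq_real g (f - g)
      simp only [h0, mul_zero, add_zero] at this
      simpa [add_sub_cancel] using this
    have h2 : 0 < ‖f - g‖ ^ 2 := by
      have := norm_pos_iff.mpr hne; positivity
    nlinarith [norm_nonneg g, norm_nonneg f]
  have := hf g
  have hlt : Ψ (fun i => ⟪f, Φ (x i)⟫) ‖g‖ < Ψ (fun i => ⟪f, Φ (x i)⟫) ‖f‖ :=
    hΨ _ _ _ hnorm
  have heq : (fun i => ⟪g, Φ (x i)⟫) = fun i => ⟪f, Φ (x i)⟫ := funext hinner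
  rw [heq] at this
  linarith
end
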